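/- arXiv:1008.1622 — 3 statements merged into one kernel-verified Lean document; each statement's English description precedes it below -/
import Mathlib

section
/- Let z_1, …, z_n ∈ ℤ_{≥0}^m be pairwise distinct vectors, let x* ∈ ℝ_{>0}^m, let μ be a permutation of {1, …, n}, and let I ⊆ {1, …, m} be nonempty. If the closure of the stratum S_μ in ℝ^m meets L_I (i.e., cl(S_μ) ∩ L_I ≠ ∅), then there exists α ∈ ℝ^m with α_i < 0 for all i ∈ I, α_i = 0 for all i ∉ I, and ⟨z_{μ(i)} − z_{μ(i+1)}, α⟩ ≥ 0 for all i = 1, …, n−1. -/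
open Filter Topology

noncomputable section

/-- The monomial `x^z = ∏ l, x l ^ z l`. -/
def mono {m : ℕ} (zv : Fin m → ℕ) (x : Fin m → ℝ) : ℝ := ∏ l, x l ^ zv l

/-- The ratio monomial `(x/x*)^z = ∏ l, (x l / x* l) ^ z l`. -/
def ratio {m : ℕ} (xstar x : Fin m → ℝ) (zv : Fin m → ℕ) : ℝ :=
  ∏ l, (x l / xstar l) ^ zv l

/-- The mass-action vector field `f(x) = Σ_{i,j} k(i,j) (z_j - z_i) x^{z_i}`
(terms with `k i j = 0` vanish, so this is the sum over reactions). -/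
def maf {m n : ℕ} (z : Fin n → Fin m → ℕ) (k : Fin n → Fin n → ℝ) (x : Fin m → ℝ) :
    Fin m → ℝ :=
  fun l => ∑ i, ∑ j, k i j * ((z j l : ℝ) - (z i l : ℝ)) * mono (z i) x

/-- `x*` is a complex balanced equilibrium. -/
def complexBalanced {m n : ℕ} (z : Fin n → Fin m → ℕ) (k : Fin n → Fin n → ℝ)
    (xstar : Fin m → ℝ) : Prop :=
  ∀ i, ∑ j, k j i * mono (z j) xstar = mono (z i) xstar * ∑ j, k i j

/-- Cyclic successor on `Fin n`. -/
def cyc {n : ℕ} (i : Fin n) : Fin n := ⟨(i.val + 1) % n, Nat.mod_lt _ i.pos⟩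

/-- The system is cyclic: its reactions are exactly `C_i → C_{i+1}` (cyclically). -/
def isCyclic {n : ℕ} (k : Fin n → Fin n → ℝ) : Prop :=
  (∀ i, 0 < k i (cyc i)) ∧ ∀ i j, j ≠ cyc i → k i j = 0

/-- Inclusion `Fin (n-1) → Fin n`. -/
def emb {n : ℕ} (i : Fin (n - 1)) : Fin n := ⟨i.val, by have := i.isLt; omega⟩

/-- Successor inclusion `Fin (n-1) → Fin n`, `i ↦ i+1`. -/
def embS {n : ℕ} (i : Fin (n - 1)) : Fin n := ⟨i.val + 1, by have := i.isLt; omega⟩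

/-- The stratum associated with a permutation `μ` of the complexes. -/
def stratum {m n : ℕ} (z : Fin n → Fin m → ℕ) (xstar : Fin m → ℝ)
    (μ : Equiv.Perm (Fin n)) : Set (Fin m → ℝ) :=
  {x | (∀ l, 0 < x l) ∧
    ∀ i : Fin (n - 1), ratio xstar x (z (μ (emb i))) > ratio xstar x (z (μ (embS i)))}

/-- `L_I`: the relative interior of the face of the nonnegative orthant given by `I`. -/
def LI {m : ℕ} (I : Finset (Fin m)) : Set (Fin m → ℝ) :=
  {x | (∀ i ∈ I, x i = 0) ∧ ∀ i ∉ I, 0 < x i}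

/-- Semi-locking set. -/
def semiLocking {m n : ℕ} (z : Fin n → Fin m → ℕ) (k : Fin n → Fin n → ℝ)
    (I : Finset (Fin m)) : Prop :=
  I.Nonempty ∧ ∀ i j : Fin n, 0 < k i j → (∃ l ∈ I, 0 < z j l) → ∃ l ∈ I, 0 < z i l

/-- The stoichiometric subspace. -/
def stoich {m n : ℕ} (z : Fin n → Fin m → ℕ) (k : Fin n → Fin n → ℝ) :
    Submodule ℝ (Fin m → ℝ) :=
  Submodule.span ℝ {v | ∃ i j : Fin n, 0 < k i j ∧ v = fun l => (z j l : ℝ) - (z i l : ℝ)}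

/-- Dot product on `Fin m → ℝ`. -/
def dotp {m : ℕ} (v u : Fin m → ℝ) : ℝ := ∑ l, v l * u l

/-- Sum of squares. -/
def qf {m : ℕ} (u : Fin m → ℝ) : ℝ := ∑ l, (u l) ^ 2

lemma qf_nonneg {m : ℕ} (u : Fin m → ℝ) : 0 ≤ qf u :=
  Finset.sum_nonneg fun _ _ => sq_nonneg _

lemma sq_le_qf {m : ℕ} (u : Fin m → ℝ) (l : Fin m) : (u l) ^ 2 ≤ qf u :=
  by unfold qf; exact Finset.single_le_sum (fun i _ => sq_nonneg (u i)) (Finset.mem_univ l)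

lemma abs_le_sqrt_qf {m : ℕ} (u : Fin m → ℝ) (l : Fin m) : |u l| ≤ Real.sqrt (qf u) := by
  rw [← Real.sqrt_sq_eq_abs]
  exact Real.sqrt_le_sqrt (sq_le_qf u l)

lemma abs_le_sqrt_of_qf_le {m : ℕ} {u : Fin m → ℝ} {R : ℝ} (h : qf u ≤ R) (l : Fin m) :
    |u l| ≤ Real.sqrt R := (abs_le_sqrt_qf u l).trans (Real.sqrt_le_sqrt h)

lemma continuous_dotp {m : ℕ} (v : Fin m → ℝ) : Continuous (dotp v) :=
  continuous_finset_sum _ fun l _ => continuous_const.mul (continuous_apply l)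

lemma continuous_qf {m : ℕ} : Continuous (qf : (Fin m → ℝ) → ℝ) :=
  continuous_finset_sum _ fun l _ => (continuous_apply l).pow 2

lemma dotp_sub {m : ℕ} (v u d : Fin m → ℝ) :
    dotp v (fun l => u l - d l) = dotp v u - dotp v d := by
  simp [dotp, mul_sub, Finset.sum_sub_distrib]

lemma dotp_add_mul {m : ℕ} (v a b : Fin m → ℝ) (K : ℝ) :
    dotp v (fun l => a l + K * b l) = dotp v a + K * dotp v b := by
  simp only [dotp, mul_add, Finset.sum_add_distrib, Finset.mul_sum]
  congr 1
  exact Finset.sum_congr rfl fun l _ => by ring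

lemma dotp_div {m : ℕ} (v u : Fin m → ℝ) (c : ℝ) :
    dotp v (fun l => u l / c) = dotp v u / c := by
  simp only [dotp, Finset.sum_div]
  exact Finset.sum_congr rfl fun l _ => by ring

lemma dotp_self {m : ℕ} (u : Fin m → ℝ) : dotp u u = qf u := by
  simp [dotp, qf, sq]

lemma qf_sub {m : ℕ} (u d : Fin m → ℝ) :
    qf (fun l => u l - d l) = qf u - 2 * dotp u d + qf d := by
  unfold qf dotp
  rw [Finset.mul_sum, ← Finset.sum_sub_distrib, ← Finset.sum_add_distrib]
  exact Finset.sum_congr rfl fun l _ => by ring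

lemma dotp_comm {m : ℕ} (v u : Fin m → ℝ) : dotp v u = dotp u v := by
  simp [dotp, mul_comm]

/-- ε-feasibility implies feasibility, for linear systems of the form
`⟨w i, u⟩ ≥ 0 (i ∈ C)`, `u l ≤ -1 (l ∈ I)`, `u l = 0 (l ∉ I)`. -/
lemma key {m : ℕ} {ι : Type*} [Fintype ι] [DecidableEq ι] (w : ι → Fin m → ℝ)
    (I : Finset (Fin m)) :
    ∀ C : Finset ι,
    (∀ ε : ℝ, 0 < ε → ∃ u : Fin m → ℝ,
        (∀ i ∈ C, -ε ≤ dotp (w i) u) ∧ (∀ l ∈ I, u l ≤ -1) ∧ (∀ l ∉ I, u l = 0)) →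
    ∃ α : Fin m → ℝ,
        (∀ i ∈ C, 0 ≤ dotp (w i) α) ∧ (∀ l ∈ I, α l ≤ -1) ∧ (∀ l ∉ I, α l = 0) := by
  classical
  intro C
  induction C using Finset.strongInductionOn with
  | _ C ih =>
  intro H
  have hε : ∀ j : ℕ, (0:ℝ) < 1 / ((j:ℝ) + 1) := fun j => by positivity
  choose W hW using fun j : ℕ => H (1 / ((j:ℝ)+1)) (hε j)
  -- minimizers of the sum of squares over the ε-feasible sets
  have hmin : ∀ j : ℕ, ∃ r : Fin m → ℝ,
      ((∀ i ∈ C, -(1/((j:ℝ)+1)) ≤ dotp (w i) r) ∧ (∀ l ∈ I, r l ≤ -1) ∧ (∀ l ∉ I, r l = 0))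
      ∧ ∀ x : Fin m → ℝ,
        ((∀ i ∈ C, -(1/((j:ℝ)+1)) ≤ dotp (w i) x) ∧ (∀ l ∈ I, x l ≤ -1) ∧ (∀ l ∉ I, x l = 0)) →
        qf (r) ≤ qf x := by
    intro j
    set S : Set (Fin m → ℝ) := {u |
      ((∀ i ∈ C, -(1/((j:ℝ)+1)) ≤ dotp (w i) u) ∧ (∀ l ∈ I, u l ≤ -1) ∧ (∀ l ∉ I, u l = 0))
      ∧ qf u ≤ qf (W j)} with hS
    have hclosed : IsClosed S := by
      rw [hS, Set.setOf_and, Set.setOf_and, Set.setOf_and]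
      refine IsClosed.inter (IsClosed.inter ?_ (IsClosed.inter ?_ ?_)) ?_
      · rw [show {u : Fin m → ℝ | ∀ i ∈ C, -(1/((j:ℝ)+1)) ≤ dotp (w i) u}
            = ⋂ i ∈ (C : Set ι), {u | -(1/((j:ℝ)+1)) ≤ dotp (w i) u} by ext u; simp]
        exact isClosed_biInter fun i _ => isClosed_le continuous_const (continuous_dotp _)
      · rw [show {u : Fin m → ℝ | ∀ l ∈ I, u l ≤ -1}
            = ⋂ l ∈ (I : Set (Fin m)), {u | u l ≤ -1} by ext u; simp]
        exact isClosed_biInter fun l _ => isClosed_le (continuous_apply l) continuous_const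
      · rw [show {u : Fin m → ℝ | ∀ l ∉ I, u l = 0}
            = ⋂ l ∈ ((I : Set (Fin m))ᶜ), {u | u l = 0} by ext u; simp]
        exact isClosed_biInter fun l _ => isClosed_eq (continuous_apply l) continuous_const
      · exact isClosed_le continuous_qf continuous_const
    have hsubset : S ⊆ Metric.closedBall (0 : Fin m → ℝ) (Real.sqrt (qf (W j))) := by
      intro u hu
      refine mem_closedBall_zero_iff.2 ((pi_norm_le_iff_of_nonneg (Real.sqrt_nonneg _)).2
        fun l => ?_)
      rw [Real.norm_eq_abs]
      exact abs_le_sqrt_of_qf_le hu.2 l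
    have hcompact : IsCompact S :=
      (isCompact_closedBall _ _).of_isClosed_subset hclosed hsubset
    have hne : S.Nonempty := ⟨W j, hW j, le_refl _⟩
    obtain ⟨r, hrS, hrmin⟩ := hcompact.exists_isMinOn hne continuous_qf.continuousOn
    refine ⟨r, hrS.1, fun x hx => ?_⟩
    rcases le_or_gt (qf x) (qf (W j)) with hle | hlt
    · exact isMinOn_iff.1 hrmin x ⟨hx, hle⟩
    · exact le_trans (isMinOn_iff.1 hrmin (W j) ⟨hW j, le_refl _⟩) hlt.le
  choose r hrF hrmin using hmin
  by_cases hbdd : ∃ R : ℝ, ∃ᶠ j in atTop, qf (r j) ≤ R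
  · -- Case A : a subsequence of minimizers is bounded; its limit works
    obtain ⟨R, hR⟩ := hbdd
    obtain ⟨φ, hφ, hφR⟩ := Filter.extraction_of_frequently_atTop hR
    have hball : ∀ j, r (φ j) ∈ Metric.closedBall (0 : Fin m → ℝ) (Real.sqrt R) := by
      intro j
      refine mem_closedBall_zero_iff.2 ((pi_norm_le_iff_of_nonneg (Real.sqrt_nonneg _)).2
        fun l => ?_)
      rw [Real.norm_eq_abs]
      exact abs_le_sqrt_of_qf_le (hφR j) l
    obtain ⟨α, hαball, ψ, hψ, htend⟩ := (isCompact_closedBall _ _).tendsto_subseq hball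
    have hcoord : ∀ l, Tendsto (fun j => r (φ (ψ j)) l) atTop (𝓝 (α l)) :=
      fun l => ((continuous_apply l).tendsto α).comp htend
    refine ⟨α, ?_, ?_, ?_⟩
    · intro i hi
      have h1 : Tendsto (fun j => dotp (w i) (r (φ (ψ j)))) atTop (𝓝 (dotp (w i) α)) :=
        ((continuous_dotp (w i)).tendsto α).comp htend
      have h2 : Tendsto (fun j : ℕ => -(1 / ((φ (ψ j) : ℝ) + 1))) atTop (𝓝 0) := by
        have ht : Tendsto (fun j : ℕ => φ (ψ j)) atTop atTop := (hφ.comp hψ).tendsto_atTop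
        have := ((tendsto_one_div_add_atTop_nhds_zero_nat (𝕜 := ℝ)).comp ht).neg
        simpa using this
      exact le_of_tendsto_of_tendsto' h2 h1 fun j => (hrF (φ (ψ j))).1 i hi
    · intro l hl
      exact le_of_tendsto' (hcoord l) fun j => (hrF (φ (ψ j))).2.1 l hl
    · intro l hl
      exact tendsto_nhds_unique
        ((hcoord l).congr fun j => (hrF (φ (ψ j))).2.2 l hl) tendsto_const_nhds
  · -- Case B : the minimizers blow up; extract an asymptotic direction d
    have htop : Tendsto (fun j => qf (r j)) atTop atTop := by
      rw [Filter.tendsto_atTop]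
      intro b
      have hnb : ¬ ∃ᶠ j in atTop, qf (r j) ≤ b := fun hf => hbdd ⟨b, hf⟩
      rw [Filter.not_frequently] at hnb
      exact hnb.mono fun j hj => (not_le.1 hj).le
    set ν : ℕ → ℝ := fun j => Real.sqrt (qf (r j)) with hν
    set d' : ℕ → Fin m → ℝ := fun j => fun l => r j l / ν j with hd'
    have hrle : ∀ j l, r j l ≤ 0 := by
      intro j l
      by_cases hl : l ∈ I
      · exact le_trans ((hrF j).2.1 l hl) (by norm_num)
      · exact le_of_eq ((hrF j).2.2 l hl)
    have hνnn : ∀ j, 0 ≤ ν j := fun j => Real.sqrt_nonneg _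
    have hball : ∀ j, d' j ∈ Metric.closedBall (0 : Fin m → ℝ) 1 := by
      intro j
      refine mem_closedBall_zero_iff.2 ((pi_norm_le_iff_of_nonneg zero_le_one).2 fun l => ?_)
      rw [Real.norm_eq_abs, hd']
      rcases eq_or_lt_of_le (hνnn j) with h0 | h0
      · simp [← h0]
      · rw [abs_div, abs_of_pos h0, div_le_one h0]
        exact (abs_le_sqrt_qf (r j) l)
    obtain ⟨d, hdball, ψ, hψ, hdt⟩ := (isCompact_closedBall _ _).tendsto_subseq hball
    have hνtop : ∀ K : ℝ, ∀ᶠ j in atTop, K ≤ ν (ψ j) := by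
      intro K
      have h1 : Tendsto (fun j => qf (r (ψ j))) atTop atTop := htop.comp hψ.tendsto_atTop
      filter_upwards [h1.eventually_ge_atTop ((max K 0)^2)] with j hj
      calc K ≤ max K 0 := le_max_left _ _
        _ = Real.sqrt ((max K 0)^2) := (Real.sqrt_sq (le_max_right _ _)).symm
        _ ≤ ν (ψ j) := Real.sqrt_le_sqrt hj
    have hνpos : ∀ᶠ j in atTop, 0 < ν (ψ j) :=
      (hνtop 1).mono fun j h => lt_of_lt_of_le one_pos h
    have hcoord : ∀ l, Tendsto (fun j => d' (ψ j) l) atTop (𝓝 (d l)) :=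
      fun l => ((continuous_apply l).tendsto d).comp hdt
    have hdle : ∀ l, d l ≤ 0 := by
      intro l
      refine le_of_tendsto' (hcoord l) fun j => ?_
      exact div_nonpos_of_nonpos_of_nonneg (hrle _ l) (hνnn _)
    have hdzero : ∀ l ∉ I, d l = 0 := by
      intro l hl
      refine tendsto_nhds_unique ((hcoord l).congr fun j => ?_) tendsto_const_nhds
      rw [hd']
      simp [(hrF (ψ j)).2.2 l hl]
    have hqfd : qf d = 1 := by
      have h1 : Tendsto (fun j => qf (d' (ψ j))) atTop (𝓝 (qf d)) :=
        (continuous_qf.tendsto d).comp hdt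
      have h2 : ∀ᶠ j in atTop, qf (d' (ψ j)) = 1 := by
        filter_upwards [hνpos] with j hj
        have hq : qf (d' (ψ j)) = qf (r (ψ j)) / (ν (ψ j))^2 := by
          unfold qf
          rw [Finset.sum_div]
          exact Finset.sum_congr rfl fun l _ => by rw [hd']; ring
        have hqpos : 0 < qf (r (ψ j)) := Real.sqrt_pos.1 hj
        rw [hq, hν, Real.sq_sqrt (qf_nonneg _)]
        exact div_self (ne_of_gt hqpos)
      have h2' : (fun j => qf (d' (ψ j))) =ᶠ[atTop] (fun _ => (1:ℝ)) := h2
      exact tendsto_nhds_unique (Filter.Tendsto.congr' h2' h1) tendsto_const_nhds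
    have hwd : ∀ i ∈ C, 0 ≤ dotp (w i) d := by
      intro i hi
      have h1 : Tendsto (fun j => dotp (w i) (d' (ψ j))) atTop (𝓝 (dotp (w i) d)) :=
        ((continuous_dotp (w i)).tendsto d).comp hdt
      have h2 : Tendsto (fun j : ℕ => -(1 / ((ψ j : ℝ) + 1))) atTop (𝓝 0) := by
        have := ((tendsto_one_div_add_atTop_nhds_zero_nat (𝕜 := ℝ)).comp hψ.tendsto_atTop).neg
        simpa using this
      refine le_of_tendsto_of_tendsto h2 h1 ?_
      filter_upwards [hνtop 1] with j hj
      have hνp : (0:ℝ) < ν (ψ j) := lt_of_lt_of_le one_pos hj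
      have hdd : dotp (w i) (d' (ψ j)) = dotp (w i) (r (ψ j)) / ν (ψ j) := dotp_div _ _ _
      rw [hdd]
      have hr := (hrF (ψ j)).1 i hi
      rcases le_or_gt 0 (dotp (w i) (r (ψ j))) with hc | hc
      · have : 0 ≤ dotp (w i) (r (ψ j)) / ν (ψ j) := div_nonneg hc (hνnn _)
        have hneg : (0:ℝ) < 1 / ((ψ j:ℝ) + 1) := hε (ψ j)
        linarith
      · have h3 : dotp (w i) (r (ψ j)) ≤ dotp (w i) (r (ψ j)) / ν (ψ j) := by
          rw [le_div_iff₀ hνp]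
          nlinarith
        linarith
    set C' := C.filter (fun i => dotp (w i) d ≤ 0) with hC'
    by_cases hCC : C' = C
    · -- impossible: we could move off the minimizer in direction -d
      exfalso
      have hdz : ∀ i ∈ C, dotp (w i) d = 0 := by
        intro i hi
        have hi' : i ∈ C' := by rw [hCC]; exact hi
        exact le_antisymm (Finset.mem_filter.1 hi').2 (hwd i hi)
      have E1 : ∀ᶠ j in atTop, ∀ l, d l < 0 → r (ψ j) l ≤ -1 + d l := by
        rw [eventually_all]
        intro l
        by_cases hdl : d l < 0
        · have hhalf : ∀ᶠ j in atTop, d' (ψ j) l < d l / 2 :=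
            (hcoord l).eventually_lt_const (by linarith)
          filter_upwards [hhalf, hνtop ((2 * (d l - 1)) / d l), hνpos] with j h1 h2 h3
          intro _
          have hrd : r (ψ j) l = ν (ψ j) * d' (ψ j) l := by
            rw [hd']
            field_simp
          have h4 : ν (ψ j) * d' (ψ j) l ≤ ν (ψ j) * (d l / 2) :=
            mul_le_mul_of_nonneg_left h1.le (hνnn _)
          have h5 : ν (ψ j) * d l ≤ 2 * (d l - 1) := (div_le_iff_of_neg hdl).1 h2
          rw [hrd]
          linarith
        · exact Filter.Eventually.of_forall fun j h => absurd h hdl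
      have E2 : ∀ᶠ j in atTop, 1 ≤ dotp (r (ψ j)) d := by
        have h1 : Tendsto (fun j => dotp d (d' (ψ j))) atTop (𝓝 (dotp d d)) :=
          ((continuous_dotp d).tendsto d).comp hdt
        have h2 : (1/2 : ℝ) < dotp d d := by rw [dotp_self, hqfd]; norm_num
        filter_upwards [h1.eventually_const_lt h2, hνtop 2, hνpos] with j h3 h4 h5
        have hrel : dotp (r (ψ j)) d = ν (ψ j) * dotp d (d' (ψ j)) := by
          unfold dotp
          rw [Finset.mul_sum]
          refine Finset.sum_congr rfl fun l _ => ?_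
          rw [hd']
          field_simp
        rw [hrel]
        nlinarith
      obtain ⟨j, hE1, hE2⟩ := (E1.and E2).exists
      have hfeas : (∀ i ∈ C, -(1/((ψ j:ℝ)+1)) ≤ dotp (w i) (fun l => r (ψ j) l - d l)) ∧
          (∀ l ∈ I, r (ψ j) l - d l ≤ -1) ∧ (∀ l ∉ I, r (ψ j) l - d l = 0) := by
        refine ⟨fun i hi => ?_, fun l hl => ?_, fun l hl => ?_⟩
        · rw [dotp_sub, hdz i hi, sub_zero]
          exact (hrF (ψ j)).1 i hi
        · rcases lt_or_eq_of_le (hdle l) with hdl | hdl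
          · have := hE1 l hdl
            linarith
          · rw [hdl, sub_zero]
            exact (hrF (ψ j)).2.1 l hl
        · rw [(hrF (ψ j)).2.2 l hl, hdzero l hl, sub_zero]
      have hlt : qf (fun l => r (ψ j) l - d l) < qf (r (ψ j)) := by
        rw [qf_sub, hqfd]
        linarith
      have := hrmin (ψ j) _ hfeas
      linarith
    · -- recurse on the strictly smaller constraint set C'
      have hsub : C' ⊆ C := Finset.filter_subset _ _
      have hss : C' ⊂ C := hsub.ssubset_of_ne hCC
      obtain ⟨α', hα'1, hα'2, hα'3⟩ := ih C' hss (fun ε hεp =>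
        (H ε hεp).imp fun u hu => ⟨fun i hi => hu.1 i (hsub hi), hu.2.1, hu.2.2⟩)
      set K : ℝ := 1 + ∑ i ∈ C,
        max 0 (if 0 < dotp (w i) d then (-(dotp (w i) α')) / dotp (w i) d else 0) with hK
      have hKpos : (0:ℝ) < K :=
        add_pos_of_pos_of_nonneg one_pos (Finset.sum_nonneg fun i _ => le_max_left _ _)
      have hKge : ∀ i ∈ C,
          max 0 (if 0 < dotp (w i) d then (-(dotp (w i) α')) / dotp (w i) d else 0) ≤ K := by
        intro i hi
        have := Finset.single_le_sum
          (f := fun i => max 0 (if 0 < dotp (w i) d then (-(dotp (w i) α')) / dotp (w i) d else 0))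
          (fun i _ => le_max_left _ _) hi
        rw [hK]
        linarith
      refine ⟨fun l => α' l + K * d l, ?_, ?_, ?_⟩
      · intro i hi
        rw [dotp_add_mul]
        by_cases hic : i ∈ C'
        · exact add_nonneg (hα'1 i hic) (mul_nonneg hKpos.le (hwd i hi))
        · have hpos : 0 < dotp (w i) d :=
            lt_of_not_ge fun hle => hic (Finset.mem_filter.2 ⟨hi, hle⟩)
          have h1 := hKge i hi
          rw [if_pos hpos] at h1
          have h2 : (-(dotp (w i) α')) / dotp (w i) d ≤ K := le_trans (le_max_right _ _) h1
          have h3 := (div_le_iff₀ hpos).1 h2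
          linarith
      · intro l hl
        show α' l + K * d l ≤ -1
        have h1 : K * d l ≤ 0 := mul_nonpos_iff.2 (Or.inl ⟨hKpos.le, hdle l⟩)
        have := hα'2 l hl
        linarith
      · intro l hl
        show α' l + K * d l = 0
        rw [hα'3 l hl, hdzero l hl]
        ring


/-- if the closure of the stratum `S_μ` meets `L_I`, then there is a vector
`α` that is negative on `I`, zero off `I`, and has nonnegative inner product with each
`z_{μ(i)} - z_{μ(i+1)}`, `i = 1, …, n-1`. -/
theorem stmt0 {m n : ℕ} (z : Fin n → Fin m → ℕ) (hz : Function.Injective z)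
    (xstar : Fin m → ℝ) (hxs : ∀ l, 0 < xstar l)
    (μ : Equiv.Perm (Fin n)) (I : Finset (Fin m)) (hI : I.Nonempty)
    (h : (closure (stratum z xstar μ) ∩ LI I).Nonempty) :
    ∃ α : Fin m → ℝ, (∀ i ∈ I, α i < 0) ∧ (∀ i ∉ I, α i = 0) ∧
      ∀ i : Fin (n - 1),
        0 ≤ ∑ l, ((z (μ (emb i)) l : ℝ) - (z (μ (embS i)) l : ℝ)) * α l := by
  classical
  obtain ⟨y, hyc, hyL⟩ := h
  obtain ⟨hyI, hyO⟩ := hyL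
  have hmne : Nonempty (Fin m) := ⟨hI.choose⟩
  set w : Fin (n-1) → Fin m → ℝ :=
    fun i l => ((z (μ (emb i)) l : ℝ) - (z (μ (embS i)) l : ℝ)) with hw
  have Hfeas : ∀ ε : ℝ, 0 < ε → ∃ u : Fin m → ℝ,
      (∀ i ∈ (Finset.univ : Finset (Fin (n-1))), -ε ≤ dotp (w i) u) ∧
      (∀ l ∈ I, u l ≤ -1) ∧ (∀ l ∉ I, u l = 0) := by
    intro ε hεp
    set B : Fin m → ℝ :=
      fun l => |Real.log (y l / (2 * xstar l))| + |Real.log ((2 * y l) / xstar l)| with hB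
    have hBnn : ∀ l, 0 ≤ B l := fun l => add_nonneg (abs_nonneg _) (abs_nonneg _)
    set C0 : ℝ := ∑ i : Fin (n-1), ∑ l : Fin m, (if l ∈ I then 0 else |w i l| * B l) with hC0
    have hC0nn : 0 ≤ C0 := by
      refine Finset.sum_nonneg fun i _ => Finset.sum_nonneg fun l _ => ?_
      split_ifs
      · exact le_refl 0
      · exact mul_nonneg (abs_nonneg _) (hBnn l)
    set M : ℝ := 1 + C0 / ε with hM
    have hMpos : 0 < M := by positivity
    set δ : ℝ := Finset.univ.inf' Finset.univ_nonempty
      (fun l => if l ∈ I then xstar l * Real.exp (-M) else y l / 2) with hδ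
    have hδpos : 0 < δ := by
      rw [hδ, Finset.lt_inf'_iff]
      intro l _
      split_ifs with hl
      · exact mul_pos (hxs l) (Real.exp_pos _)
      · have := hyO l hl
        linarith
    have hδle : ∀ l, δ ≤ (if l ∈ I then xstar l * Real.exp (-M) else y l / 2) :=
      fun l => Finset.inf'_le _ (Finset.mem_univ l)
    obtain ⟨x, hxS, hxd⟩ := Metric.mem_closure_iff.1 hyc δ hδpos
    obtain ⟨hxpos, hxlt⟩ := hxS
    set β : Fin m → ℝ := fun l => Real.log (x l / xstar l) with hβ
    have hdistl : ∀ l, dist (y l) (x l) < δ :=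
      fun l => lt_of_le_of_lt (dist_le_pi_dist y x l) hxd
    have hF1 : ∀ l ∈ I, β l ≤ -M := by
      intro l hl
      have h1 : x l < xstar l * Real.exp (-M) := by
        have hdl := hdistl l
        rw [Real.dist_eq, hyI l hl] at hdl
        have hxl := hxpos l
        have h2 := hδle l
        rw [if_pos hl] at h2
        calc x l = |0 - x l| := by rw [abs_sub_comm, sub_zero, abs_of_pos hxl]
          _ < δ := hdl
          _ ≤ _ := h2
      rw [hβ, Real.log_le_iff_le_exp (div_pos (hxpos l) (hxs l)), div_le_iff₀ (hxs l)]
      nlinarith [Real.exp_pos (-M), hxs l]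
    have hF2 : ∀ l ∉ I, |β l| ≤ B l := by
      intro l hl
      have h2 := hδle l
      rw [if_neg hl] at h2
      have hd := hdistl l
      rw [Real.dist_eq, abs_sub_lt_iff] at hd
      have hy2 : 0 < y l := hyO l hl
      have hx1 : y l / 2 < x l := by linarith [hd.1]
      have hx2 : x l < 2 * y l := by linarith [hd.2]
      have hlo : Real.log (y l / (2 * xstar l)) ≤ β l := by
        rw [hβ]
        apply Real.log_le_log (div_pos hy2 (mul_pos two_pos (hxs l)))
        rw [show y l / (2 * xstar l) = (y l / 2) / xstar l by ring]
        exact (div_le_div_iff_of_pos_right (hxs l)).2 hx1.le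
      have hhi : β l ≤ Real.log ((2 * y l) / xstar l) := by
        rw [hβ]
        apply Real.log_le_log (div_pos (hxpos l) (hxs l))
        exact (div_le_div_iff_of_pos_right (hxs l)).2 hx2.le
      rw [abs_le]
      have hBl : B l = |Real.log (y l / (2 * xstar l))| + |Real.log ((2 * y l) / xstar l)| := rfl
      constructor
      · have hn := neg_abs_le (Real.log (y l / (2 * xstar l)))
        have hnn := abs_nonneg (Real.log ((2 * y l) / xstar l))
        rw [hBl]
        linarith
      · have hs := le_abs_self (Real.log ((2 * y l) / xstar l))
        have hnn := abs_nonneg (Real.log (y l / (2 * xstar l)))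
        rw [hBl]
        linarith
    have hlog : ∀ kk : Fin n, Real.log (ratio xstar x (z kk)) = ∑ l, (z kk l : ℝ) * β l := by
      intro kk
      rw [ratio, Real.log_prod]
      · exact Finset.sum_congr rfl fun l _ => by rw [Real.log_pow, hβ]
      · intro l _
        exact pow_ne_zero _ (ne_of_gt (div_pos (hxpos l) (hxs l)))
    have hratiopos : ∀ kk : Fin n, 0 < ratio xstar x (z kk) := fun kk =>
      Finset.prod_pos fun l _ => pow_pos (div_pos (hxpos l) (hxs l)) _
    have hF3 : ∀ i : Fin (n-1), 0 < dotp (w i) β := by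
      intro i
      have hlt := Real.log_lt_log (hratiopos (μ (embS i))) (hxlt i)
      rw [hlog, hlog] at hlt
      have heq : dotp (w i) β
          = ∑ l, (z (μ (emb i)) l : ℝ) * β l - ∑ l, (z (μ (embS i)) l : ℝ) * β l := by
        rw [dotp, ← Finset.sum_sub_distrib]
        refine Finset.sum_congr rfl fun l _ => by rw [hw]; ring
      rw [heq]
      linarith
    refine ⟨fun l => if l ∈ I then β l / M else 0, fun i _ => ?_, fun l hl => ?_, fun l hl => ?_⟩
    · have hsplit : dotp (w i) β
          = (∑ l, if l ∈ I then w i l * β l else 0) + (∑ l, if l ∈ I then 0 else w i l * β l) := by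
        rw [dotp, ← Finset.sum_add_distrib]
        refine Finset.sum_congr rfl fun l _ => by split_ifs <;> ring
      have habs : |∑ l, if l ∈ I then (0:ℝ) else w i l * β l| ≤ C0 := by
        calc |∑ l, if l ∈ I then (0:ℝ) else w i l * β l|
            ≤ ∑ l, |if l ∈ I then (0:ℝ) else w i l * β l| := Finset.abs_sum_le_sum_abs _ _
          _ ≤ ∑ l, (if l ∈ I then 0 else |w i l| * B l) := by
              refine Finset.sum_le_sum fun l _ => ?_
              split_ifs with hlI
              · simp
              · rw [abs_mul]
                exact mul_le_mul_of_nonneg_left (hF2 l hlI) (abs_nonneg _)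
          _ ≤ C0 := by
              rw [hC0]
              exact Finset.single_le_sum
                (f := fun i : Fin (n-1) => ∑ l, (if l ∈ I then (0:ℝ) else |w i l| * B l))
                (fun i _ => Finset.sum_nonneg fun l _ => by
                  split_ifs
                  · exact le_refl 0
                  · exact mul_nonneg (abs_nonneg _) (hBnn l))
                (Finset.mem_univ i)
      have hdu : dotp (w i) (fun l => if l ∈ I then β l / M else 0)
          = (∑ l, if l ∈ I then w i l * β l else 0) / M := by
        rw [dotp, Finset.sum_div]
        refine Finset.sum_congr rfl fun l _ => ?_
        split_ifs
        · ring
        · simp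
      rw [hdu]
      have hS1 : -C0 ≤ ∑ l, if l ∈ I then w i l * β l else 0 := by
        have h4 := hF3 i
        have h5 := (abs_le.1 habs).2
        linarith [hsplit]
      have hC0M : C0 / M ≤ ε := by
        rw [div_le_iff₀ hMpos, hM]
        have hfe : ε * (1 + C0 / ε) = ε + C0 := by field_simp
        rw [hfe]
        linarith
      have h6 : (-C0) / M ≤ (∑ l, if l ∈ I then w i l * β l else 0) / M :=
        (div_le_div_iff_of_pos_right hMpos).2 hS1
      rw [neg_div] at h6
      linarith
    · show (if l ∈ I then β l / M else 0) ≤ -1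
      rw [if_pos hl, div_le_iff₀ hMpos]
      have := hF1 l hl
      linarith
    · show (if l ∈ I then β l / M else 0) = 0
      rw [if_neg hl]
  obtain ⟨α, h1, h2, h3⟩ := key w I Finset.univ Hfeas
  refine ⟨α, fun l hl => lt_of_le_of_lt (h2 l hl) (by norm_num), h3, fun i => ?_⟩
  have h4 := h1 i (Finset.mem_univ i)
  rw [dotp] at h4
  exact h4
end
end

section
/- Consider a cyclic mass-action system with n ≥ 2 complexes that is complex balanced at x* ∈ ℝ_{>0}^m, and let μ be any permutation of {1, …, n}. Then there exists κ > 0 such that for all x ∈ ℝ^m, f(x) = κ · Σ_{i=1}^{n−1} ( Σ_{j=1}^{i} s_{μ(j)} ) · ( (x/x*)^{z_{μ(i)}} − (x/x*)^{z_{μ(i+1)}} ), where s_j := z_{j+1} − z_j with indices taken mod n (z_{n+1} = z_1) and (x/x*)^z := Π_{l=1}^m (x_l/x*_l)^{z_l}. -/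
open Filter Topology

noncomputable section

lemma cyc_injective {n : ℕ} : Function.Injective (cyc (n := n)) := by
  intro a b h
  have ha := a.isLt
  have hb := b.isLt
  have h' : (a.val + 1) % n = (b.val + 1) % n := congrArg Fin.val h
  have key : ∀ c : ℕ, c < n → (c + 1) % n = if c + 1 = n then 0 else c + 1 := by
    intro c hc
    by_cases hcc : c + 1 = n
    · simp [hcc]
    · rw [if_neg hcc, Nat.mod_eq_of_lt (by omega)]
  rw [key a.val ha, key b.val hb] at h'
  apply Fin.ext
  by_cases h1 : a.val + 1 = n <;> by_cases h2 : b.val + 1 = n <;>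
    simp [h1, h2] at h' <;> omega

lemma abel_sum (G R : ℕ → ℝ) (N : ℕ) :
    ∑ i ∈ Finset.range (N + 1), G i * R i =
      (∑ j ∈ Finset.range (N + 1), G j) * R N +
      ∑ i ∈ Finset.range N,
        (∑ j ∈ Finset.range (i + 1), G j) * (R i - R (i + 1)) := by
  induction N with
  | zero => simp
  | succ N ih =>
    rw [Finset.sum_range_succ (f := fun i => G i * R i), ih,
      Finset.sum_range_succ
        (f := fun i => (∑ j ∈ Finset.range (i + 1), G j) * (R i - R (i + 1))),
      Finset.sum_range_succ (f := G) (n := N + 1)]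
    ring

lemma mono_pos {m : ℕ} (zv : Fin m → ℕ) (x : Fin m → ℝ) (hx : ∀ l, 0 < x l) :
    0 < mono zv x :=
  Finset.prod_pos fun l _ => pow_pos (hx l) _

lemma mono_eq_ratio {m : ℕ} (zv : Fin m → ℕ) (xstar x : Fin m → ℝ)
    (hxs : ∀ l, 0 < xstar l) :
    mono zv x = ratio xstar x zv * mono zv xstar := by
  unfold mono ratio
  rw [← Finset.prod_mul_distrib]
  refine Finset.prod_congr rfl fun l _ => ?_
  rw [← mul_pow, div_mul_cancel₀ _ (hxs l).ne']

/-- a cyclic complex balanced system can be rewritten, for any permutation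
`μ` of the complexes, as
`f(x) = κ Σ_{i=1}^{n-1} (Σ_{j=1}^i s_{μ(j)}) ((x/x*)^{z_{μ(i)}} - (x/x*)^{z_{μ(i+1)}})`,
where `s_j = z_{j+1} - z_j` (indices mod `n`). -/
theorem stmt3 {m n : ℕ} (hn : 2 ≤ n) (z : Fin n → Fin m → ℕ) (hz : Function.Injective z)
    (k : Fin n → Fin n → ℝ) (hknn : ∀ i j, 0 ≤ k i j) (hkd : ∀ i, k i i = 0)
    (hcyc : isCyclic k)
    (xstar : Fin m → ℝ) (hxs : ∀ l, 0 < xstar l)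
    (hcb : complexBalanced z k xstar) (μ : Equiv.Perm (Fin n)) :
    ∃ κ : ℝ, 0 < κ ∧ ∀ (x : Fin m → ℝ) (l : Fin m),
      maf z k x l = κ * ∑ i : Fin (n - 1),
        (∑ j ∈ Finset.univ.filter (fun j : Fin (n - 1) => j.val ≤ i.val),
          ((z (cyc (μ (emb j))) l : ℝ) - (z (μ (emb j)) l : ℝ)))
        * (ratio xstar x (z (μ (emb i))) - ratio xstar x (z (μ (embS i)))) := by
  have hn0 : 0 < n := by omega
  -- the quantity k i (cyc i) * (x*)^(z i) is constant along the cycle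
  have hgcyc : ∀ i, k i (cyc i) * mono (z i) xstar
      = k (cyc i) (cyc (cyc i)) * mono (z (cyc i)) xstar := by
    intro i
    have h1 := hcb (cyc i)
    have hL : ∑ j, k j (cyc i) * mono (z j) xstar
        = k i (cyc i) * mono (z i) xstar := by
      apply Finset.sum_eq_single i
      · intro b _ hb
        rw [hcyc.2 b (cyc i) (fun h => hb (cyc_injective h.symm))]
        ring
      · simp
    have hR : ∑ j, k (cyc i) j = k (cyc i) (cyc (cyc i)) := by
      apply Finset.sum_eq_single (cyc (cyc i))
      · intro b _ hb; exact hcyc.2 (cyc i) b hb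
      · simp
    rw [hL, hR] at h1
    rw [h1]; ring
  set κ : ℝ := k ⟨0, hn0⟩ (cyc ⟨0, hn0⟩) * mono (z ⟨0, hn0⟩) xstar with hκdef
  have hgconst : ∀ i : Fin n, k i (cyc i) * mono (z i) xstar = κ := by
    have main : ∀ j (h : j < n), k ⟨j, h⟩ (cyc ⟨j, h⟩) * mono (z ⟨j, h⟩) xstar = κ := by
      intro j
      induction j with
      | zero => intro h; rfl
      | succ j ih =>
        intro h
        have hj : j < n := by omega
        have hc : cyc ⟨j, hj⟩ = ⟨j + 1, h⟩ := by
          apply Fin.ext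
          simp only [cyc]
          exact Nat.mod_eq_of_lt h
        rw [← hc, ← hgcyc ⟨j, hj⟩]
        exact ih hj
    intro i
    exact main i.val i.isLt
  have hκpos : 0 < κ := mul_pos (hcyc.1 _) (mono_pos _ _ hxs)
  refine ⟨κ, hκpos, fun x l => ?_⟩
  -- rewrite the vector field using complex balance
  have hmaf : maf z k x l
      = κ * ∑ i : Fin n, ((z (cyc i) l : ℝ) - z i l) * ratio xstar x (z i) := by
    unfold maf
    rw [Finset.mul_sum]
    refine Finset.sum_congr rfl fun i _ => ?_
    have hL : ∑ j, k i j * ((z j l : ℝ) - z i l) * mono (z i) x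
        = k i (cyc i) * ((z (cyc i) l : ℝ) - z i l) * mono (z i) x := by
      apply Finset.sum_eq_single (cyc i)
      · intro b _ hb; rw [hcyc.2 i b hb]; ring
      · simp
    rw [hL, mono_eq_ratio (z i) xstar x hxs]
    calc k i (cyc i) * ((z (cyc i) l : ℝ) - z i l)
          * (ratio xstar x (z i) * mono (z i) xstar)
        = (k i (cyc i) * mono (z i) xstar)
          * (((z (cyc i) l : ℝ) - z i l) * ratio xstar x (z i)) := by ring
      _ = κ * (((z (cyc i) l : ℝ) - z i l) * ratio xstar x (z i)) := by
          rw [hgconst i]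
  -- natural-number versions of the coefficients and ratios (in the μ-order)
  set G : ℕ → ℝ := fun a =>
    if h : a < n then (z (cyc (μ ⟨a, h⟩)) l : ℝ) - z (μ ⟨a, h⟩) l else 0 with hG
  set R : ℕ → ℝ := fun a =>
    if h : a < n then ratio xstar x (z (μ ⟨a, h⟩)) else 0 with hR
  have hGfin : ∀ i : Fin n, G i.val = (z (cyc (μ i)) l : ℝ) - z (μ i) l := by
    intro i; simp only [hG]; rw [dif_pos i.isLt]
  have hRfin : ∀ i : Fin n, R i.val = ratio xstar x (z (μ i)) := by
    intro i; simp only [hR]; rw [dif_pos i.isLt]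
  have hcycbij : Function.Bijective (cyc (n := n)) :=
    Finite.injective_iff_bijective.mp cyc_injective
  -- the coefficients sum to zero
  have hGsum : ∑ a ∈ Finset.range n, G a = 0 := by
    rw [← Fin.sum_univ_eq_sum_range]
    calc ∑ i : Fin n, G i.val
        = ∑ i : Fin n, ((z (cyc (μ i)) l : ℝ) - z (μ i) l) :=
          Finset.sum_congr rfl fun i _ => hGfin i
      _ = ∑ i : Fin n, ((z (cyc i) l : ℝ) - z i l) :=
          Equiv.sum_comp μ (fun i => (z (cyc i) l : ℝ) - z i l)
      _ = (∑ i : Fin n, (z (cyc i) l : ℝ)) - ∑ i : Fin n, (z i l : ℝ) :=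
          Finset.sum_sub_distrib _ _
      _ = 0 := by
          rw [Fintype.sum_bijective cyc hcycbij (fun i => (z (cyc i) l : ℝ))
            (fun i => (z i l : ℝ)) (fun i => rfl)]
          ring
  -- the vector field as a ℕ-indexed sum
  have hperm : ∑ i : Fin n, ((z (cyc i) l : ℝ) - z i l) * ratio xstar x (z i)
      = ∑ a ∈ Finset.range n, G a * R a := by
    rw [← Fin.sum_univ_eq_sum_range (fun a => G a * R a) n]
    rw [← Equiv.sum_comp μ (fun i => ((z (cyc i) l : ℝ) - z i l) * ratio xstar x (z i))]
    exact Finset.sum_congr rfl fun i _ => by rw [hGfin i, hRfin i]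
  -- inner filtered sums as ℕ-indexed partial sums
  have hin : ∀ i : Fin (n - 1),
      (∑ j ∈ Finset.univ.filter (fun j : Fin (n - 1) => j.val ≤ i.val),
        ((z (cyc (μ (emb j))) l : ℝ) - (z (μ (emb j)) l : ℝ)))
      = ∑ j ∈ Finset.range (i.val + 1), G j := by
    intro i
    have hi := i.isLt
    rw [Finset.sum_filter]
    have hcongr : ∀ j : Fin (n - 1),
        (if j.val ≤ i.val
          then ((z (cyc (μ (emb j))) l : ℝ) - (z (μ (emb j)) l : ℝ)) else 0)
        = (fun a => if a ≤ i.val then G a else 0) j.val := by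
      intro j
      by_cases hle : j.val ≤ i.val
      · simp only [hle, if_true, hG]
        rw [dif_pos (show j.val < n by have := j.isLt; omega)]
        rfl
      · simp [hle]
    rw [Finset.sum_congr rfl (fun j _ => hcongr j),
      Fin.sum_univ_eq_sum_range (fun a => if a ≤ i.val then G a else 0) (n - 1),
      ← Finset.sum_filter]
    congr 1
    ext a
    simp only [Finset.mem_filter, Finset.mem_range, Nat.lt_succ_iff]
    omega
  -- the claimed sum, in ℕ-indexed form
  have hS : ∑ i : Fin (n - 1),
      (∑ j ∈ Finset.univ.filter (fun j : Fin (n - 1) => j.val ≤ i.val),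
        ((z (cyc (μ (emb j))) l : ℝ) - (z (μ (emb j)) l : ℝ)))
      * (ratio xstar x (z (μ (emb i))) - ratio xstar x (z (μ (embS i))))
      = ∑ a ∈ Finset.range (n - 1),
        (∑ j ∈ Finset.range (a + 1), G j) * (R a - R (a + 1)) := by
    rw [← Fin.sum_univ_eq_sum_range
      (fun a => (∑ j ∈ Finset.range (a + 1), G j) * (R a - R (a + 1))) (n - 1)]
    refine Finset.sum_congr rfl fun i _ => ?_
    have hi := i.isLt
    have hRe : ratio xstar x (z (μ (emb i))) = R i.val := by
      simp only [hR]; rw [dif_pos (show i.val < n by omega)]; rfl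
    have hRs : ratio xstar x (z (μ (embS i))) = R (i.val + 1) := by
      simp only [hR]; rw [dif_pos (show i.val + 1 < n by omega)]; rfl
    rw [hin i, hRe, hRs]
  -- Abel summation
  have habel := abel_sum G R (n - 1)
  rw [show n - 1 + 1 = n from by omega] at habel
  rw [hGsum, zero_mul, zero_add] at habel
  calc maf z k x l
      = κ * ∑ i : Fin n, ((z (cyc i) l : ℝ) - z i l) * ratio xstar x (z i) := hmaf
    _ = κ * ∑ a ∈ Finset.range n, G a * R a := by rw [hperm]
    _ = κ * ∑ a ∈ Finset.range (n - 1),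
        (∑ j ∈ Finset.range (a + 1), G j) * (R a - R (a + 1)) := by rw [habel]
    _ = _ := by rw [hS]
end
end

section
/- Consider a mass-action system that is complex balanced at x* ∈ ℝ_{>0}^m, let μ be a permutation of {1, …, n}, and let I ⊆ {1, …, m} be nonempty. If cl(S_μ) ∩ L_I ≠ ∅, then there exists α ∈ ℝ^m with α_i < 0 for all i ∈ I and α_i = 0 for all i ∉ I, such that ⟨α, f(x)⟩ ≤ 0 for every x ∈ cl(S_μ). -/
open Filter Topology

noncomputable section

/-! ### Auxiliary: Farkas-type alternative for finitely generated cones -/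

section FarkasSection

open Finset
open scoped InnerProductSpace

variable {E : Type*} [NormedAddCommGroup E] [InnerProductSpace ℝ E]
variable {ι : Type*} [Fintype ι]

/-- The cone generated by a finite family. -/
def fgCone (g : ι → E) : Set E := {x | ∃ c : ι → ℝ, (∀ i, 0 ≤ c i) ∧ x = ∑ i, c i • g i}

lemma carath_aux (g : ι → E) : ∀ (N : ℕ) (c : ι → ℝ),
    (Finset.univ.filter fun i => c i ≠ 0).card ≤ N → (∀ i, 0 ≤ c i) →
    ∃ T : Finset ι, (LinearIndependent ℝ fun i : T => g i) ∧
      ∃ d : ι → ℝ, (∀ i, 0 ≤ d i) ∧ (∀ i ∉ T, d i = 0) ∧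
        ∑ i, d i • g i = ∑ i, c i • g i := by
  classical
  intro N
  induction N with
  | zero =>
    intro c hcard hc
    have hc0 : ∀ i, c i = 0 := by
      intro i
      by_contra hne
      have : i ∈ Finset.univ.filter fun i => c i ≠ 0 := by simp [hne]
      have := Finset.card_pos.mpr ⟨i, this⟩
      omega
    refine ⟨∅, ?_, c, hc, fun i _ => hc0 i, rfl⟩
    have : IsEmpty ((∅ : Finset ι) : Type _) := by simp; exact ⟨fun x => x.2⟩
    exact linearIndependent_empty_type
  | succ N ih =>
    intro c hcard hc
    set T0 := Finset.univ.filter fun i => c i ≠ 0 with hT0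
    by_cases hli : LinearIndependent ℝ fun i : T0 => g i
    · refine ⟨T0, hli, c, hc, fun i hi => ?_, rfl⟩
      by_contra hne
      exact hi (by simp [hT0, hne])
    · obtain ⟨a, ha0, i0, hi0⟩ := Fintype.not_linearIndependent_iff.mp hli
      -- key step, applied to `a` or `-a`
      have key : ∀ a : T0 → ℝ, (∑ i, a i • g i = 0) → (∃ j, 0 < a j) →
          ∃ T : Finset ι, (LinearIndependent ℝ fun i : T => g i) ∧
            ∃ d : ι → ℝ, (∀ i, 0 ≤ d i) ∧ (∀ i ∉ T, d i = 0) ∧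
              ∑ i, d i • g i = ∑ i, c i • g i := by
        intro a ha0 ⟨j, hj⟩
        set b : ι → ℝ := fun i => if h : i ∈ T0 then a ⟨i, h⟩ else 0 with hb
        have hbT0 : ∀ i ∉ T0, b i = 0 := fun i hi => dif_neg hi
        have hbsum : ∑ i, b i • g i = 0 := by
          rw [← Finset.sum_subset (Finset.subset_univ T0)
            (fun i _ hi => by rw [hbT0 i hi, zero_smul])]
          rw [← Finset.sum_coe_sort T0 (fun i => b i • g i)]
          rw [← ha0]
          exact Finset.sum_congr rfl fun i _ => by simp [hb]
        set S := T0.filter fun i => 0 < b i with hS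
        have hjS : (j : ι) ∈ S := by
          simp only [hS, Finset.mem_filter]
          exact ⟨j.2, by simpa [hb] using hj⟩
        obtain ⟨istar, hiS, hmin⟩ := S.exists_min_image (fun i => c i / b i) ⟨j, hjS⟩
        have hbistar : 0 < b istar := (Finset.mem_filter.mp hiS).2
        set t := c istar / b istar with ht
        have ht0 : 0 ≤ t := div_nonneg (hc istar) hbistar.le
        set c' : ι → ℝ := fun i => c i - t * b i with hc'
        have hc'0 : ∀ i, 0 ≤ c' i := by
          intro i
          by_cases hbi : 0 < b i
          · have hiT0 : i ∈ T0 := by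
              by_contra hiT0
              rw [hbT0 i hiT0] at hbi; exact lt_irrefl _ hbi
            have hiS : i ∈ S := Finset.mem_filter.mpr ⟨hiT0, hbi⟩
            have := hmin i hiS
            have : t * b i ≤ c i := (le_div_iff₀ hbi).mp this
            simp only [hc']; linarith
          · push_neg at hbi
            have : t * b i ≤ 0 := mul_nonpos_of_nonneg_of_nonpos ht0 hbi
            have := hc i
            simp only [hc']; linarith
        have hsum' : ∑ i, c' i • g i = ∑ i, c i • g i := by
          simp only [hc', sub_smul, Finset.sum_sub_distrib]
          have : ∑ i, (t * b i) • g i = t • ∑ i, b i • g i := by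
            rw [Finset.smul_sum]
            exact Finset.sum_congr rfl fun i _ => by rw [smul_smul]
          rw [this, hbsum, smul_zero, sub_zero]
        have histarT0 : istar ∈ T0 := (Finset.mem_filter.mp hiS).1
        have hcard' : (Finset.univ.filter fun i => c' i ≠ 0).card ≤ N := by
          have hsub : (Finset.univ.filter fun i => c' i ≠ 0) ⊆ T0.erase istar := by
            intro i hi
            simp only [Finset.mem_filter, Finset.mem_univ, true_and] at hi
            refine Finset.mem_erase.mpr ⟨?_, ?_⟩
            · rintro rfl
              apply hi
              simp only [hc', ht]
              field_simp
              ring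
            · by_contra hiT0
              apply hi
              have hci : c i = 0 := by
                by_contra hne; exact hiT0 (by simp [hT0, hne])
              simp [hc', hci, hbT0 i hiT0]
          have := Finset.card_le_card hsub
          have h2 := Finset.card_erase_of_mem histarT0
          have h3 : 0 < T0.card := Finset.card_pos.mpr ⟨istar, histarT0⟩
          omega
        obtain ⟨T, hT, d, hd0, hdT, hdsum⟩ := ih c' hcard' hc'0
        exact ⟨T, hT, d, hd0, hdT, by rw [hdsum, hsum']⟩
      rcases hi0.lt_or_gt with hneg | hpos
      · refine key (-a) (by simpa using ha0) ⟨i0, by simpa using hneg⟩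
      · exact key a ha0 ⟨i0, hpos⟩

lemma fgCone_isClosed [FiniteDimensional ℝ E] (g : ι → E) : IsClosed (fgCone g) := by
  classical
  have heq : fgCone g = ⋃ (T : Finset ι), ⋃ (_ : LinearIndependent ℝ fun i : T => g i),
      (fun c : ↥T → ℝ => ∑ i, c i • g i.1) '' {c | ∀ i, 0 ≤ c i} := by
    ext x
    constructor
    · rintro ⟨c, hc, rfl⟩
      obtain ⟨T, hT, d, hd0, hdT, hdsum⟩ :=
        carath_aux g (Finset.univ.filter fun i => c i ≠ 0).card c le_rfl hc
      refine Set.mem_iUnion.mpr ⟨T, Set.mem_iUnion.mpr ⟨hT, ⟨fun i => d i, fun i => hd0 i, ?_⟩⟩⟩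
      show (∑ i : ↥T, d ↑i • g ↑i) = _
      rw [Finset.sum_coe_sort T (fun i => d i • g i), ← hdsum]
      exact Finset.sum_subset (Finset.subset_univ T)
        (fun i _ hi => by rw [hdT i hi, zero_smul])
    · intro hx
      obtain ⟨T, hT2⟩ := Set.mem_iUnion.mp hx
      obtain ⟨hTli, c, hc0, rfl⟩ := Set.mem_iUnion.mp hT2
      refine ⟨fun i => if h : i ∈ T then c ⟨i, h⟩ else 0, fun i => ?_, ?_⟩
      · by_cases h : i ∈ T
        · simpa [h] using hc0 ⟨i, h⟩
        · simp [h]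
      · show (∑ i : ↥T, c i • g ↑i) = _
        calc (∑ i : ↥T, c i • g ↑i)
            = ∑ i : ↥T, (if h : (i : ι) ∈ T then c ⟨i, h⟩ else 0) • g ↑i :=
              Finset.sum_congr rfl fun i _ => by simp
          _ = ∑ i ∈ T, (if h : i ∈ T then c ⟨i, h⟩ else 0) • g i :=
              Finset.sum_coe_sort T (fun i => (if h : i ∈ T then c ⟨i, h⟩ else 0) • g i)
          _ = ∑ i : ι, (if h : i ∈ T then c ⟨i, h⟩ else 0) • g i :=
              Finset.sum_subset (Finset.subset_univ T) (fun i _ hi => by simp [hi])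
  rw [heq]
  refine isClosed_iUnion_of_finite fun T => isClosed_iUnion_of_finite fun hT => ?_
  set Φ : (↥T → ℝ) →ₗ[ℝ] E :=
    { toFun := fun c => ∑ i, c i • g i.1
      map_add' := by intro a b; simp [add_smul, Finset.sum_add_distrib]
      map_smul' := by intro r a; simp [smul_smul, Finset.smul_sum] } with hΦ
  have hker : LinearMap.ker Φ = ⊥ := by
    rw [LinearMap.ker_eq_bot']
    intro c hcz
    have := Fintype.linearIndependent_iff.mp hT c hcz
    funext i
    exact this i
  have hemb := Φ.isClosedEmbedding_of_injective hker
  have horth : IsClosed {c : ↥T → ℝ | ∀ i, 0 ≤ c i} := by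
    have : {c : ↥T → ℝ | ∀ i, 0 ≤ c i} = ⋂ i, {c | 0 ≤ c i} := by
      ext c; simp [Set.mem_iInter]
    rw [this]
    exact isClosed_iInter fun i => isClosed_le continuous_const (continuous_apply i)
  exact hemb.isClosedMap _ horth

lemma fg_farkas [FiniteDimensional ℝ E] (g : ι → E) (b : E) :
    b ∈ fgCone g ∨ ∃ y : E, (∀ i, 0 ≤ ⟪g i, y⟫_ℝ) ∧ ⟪y, b⟫_ℝ < 0 := by
  by_cases hb : b ∈ fgCone g
  · exact Or.inl hb
  · right
    classical
    set K : ProperCone ℝ E :=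
      { carrier := fgCone g
        zero_mem' := ⟨fun _ => 0, fun _ => le_rfl, by simp⟩
        isClosed' := fgCone_isClosed g
        smul_mem' := by
          rintro r x ⟨c, hc, rfl⟩
          refine ⟨fun i => r * c i, fun i => mul_nonneg r.2 (hc i), ?_⟩
          show (r : ℝ) • ∑ i, c i • g i = _
          rw [Finset.smul_sum]
          exact Finset.sum_congr rfl fun i _ => by rw [smul_smul]
        add_mem' := by
          rintro x y ⟨c, hc, rfl⟩ ⟨d, hd, rfl⟩
          refine ⟨fun i => c i + d i, fun i => add_nonneg (hc i) (hd i), ?_⟩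
          rw [← Finset.sum_add_distrib]
          exact Finset.sum_congr rfl fun i _ => by rw [add_smul] } with hK
    have hne : (K : Set E).Nonempty := ⟨0, ⟨fun _ => 0, fun _ => le_rfl, by simp⟩⟩
    have hcl : IsClosed (K : Set E) := fgCone_isClosed g
    obtain ⟨y, hy1, hy2⟩ :=
      K.hyperplane_separation' (x₀ := b) hb
    refine ⟨y, fun i => hy1 (g i) ⟨Pi.single i 1, fun j => ?_, ?_⟩, by rw [real_inner_comm]; exact hy2⟩
    · by_cases h : j = i
      · subst h; simp
      · simp [Pi.single_eq_of_ne h]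
    · rw [Finset.sum_eq_single i (fun j _ hj => by simp [Pi.single_eq_of_ne hj])
        (fun h => absurd (Finset.mem_univ i) h)]
      simp

end FarkasSection

/-! ### Auxiliary: the core Abel-summation inequality -/

section CoreSection

open Finset

lemma ico_telescope (R : ℕ → ℝ) (p n : ℕ) (h : p ≤ n) :
    ∑ t ∈ Finset.Ico p n, (R t - R (t+1)) = R p - R n := by
  rw [Finset.sum_Ico_eq_sub _ h, Finset.sum_range_sub' R, Finset.sum_range_sub' R]
  ring

lemma abel_core (n : ℕ) (κ : ℕ → ℕ → ℝ) (R A : ℕ → ℝ)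
    (hκ : ∀ p q, p < n → q < n → 0 ≤ κ p q)
    (hbal : ∀ p, p < n → ∑ q ∈ Finset.range n, κ q p = ∑ q ∈ Finset.range n, κ p q)
    (hR : ∀ p q, p ≤ q → q < n → R q ≤ R p)
    (hA : ∀ p q, p ≤ q → q < n → A q ≤ A p) :
    ∑ p ∈ Finset.range n, ∑ q ∈ Finset.range n, κ p q * R p * (A q - A p) ≤ 0 := by
  set g : ℕ → ℝ := fun p => ∑ q ∈ Finset.range n, κ p q * (A q - A p) with hg
  -- rewrite the target
  have htarget : ∑ p ∈ Finset.range n, ∑ q ∈ Finset.range n, κ p q * R p * (A q - A p)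
      = ∑ p ∈ Finset.range n, R p * g p := by
    refine Finset.sum_congr rfl fun p _ => ?_
    rw [hg, Finset.mul_sum]
    exact Finset.sum_congr rfl fun q _ => by ring
  rw [htarget]
  -- Abel summation
  have abel : ∑ p ∈ Finset.range n, R p * g p
      = (∑ t ∈ Finset.range n, (R t - R (t+1)) * ∑ p ∈ Finset.range (t+1), g p)
        + R n * ∑ p ∈ Finset.range n, g p := by
    have h1 : ∀ t ∈ Finset.range n, (R t - R (t+1)) * ∑ p ∈ Finset.range (t+1), g p
        = ∑ p ∈ Finset.range n, if p ≤ t then (R t - R (t+1)) * g p else 0 := by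
      intro t ht
      rw [Finset.mem_range] at ht
      rw [Finset.sum_ite, Finset.sum_const_zero, add_zero, Finset.mul_sum]
      have : Finset.filter (fun p => p ≤ t) (Finset.range n) = Finset.range (t+1) := by
        ext p; simp only [Finset.mem_filter, Finset.mem_range]; omega
      rw [this]
    rw [Finset.sum_congr rfl h1, Finset.sum_comm]
    have h2 : ∀ p ∈ Finset.range n,
        (∑ t ∈ Finset.range n, if p ≤ t then (R t - R (t+1)) * g p else 0)
        = (R p - R n) * g p := by
      intro p hp
      rw [Finset.mem_range] at hp
      rw [Finset.sum_ite, Finset.sum_const_zero, add_zero]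
      have : Finset.filter (fun t => p ≤ t) (Finset.range n) = Finset.Ico p n := by
        ext t; simp only [Finset.mem_filter, Finset.mem_range, Finset.mem_Ico]; omega
      rw [this, ← Finset.sum_mul, ico_telescope R p n hp.le]
    rw [Finset.sum_congr rfl h2, Finset.mul_sum, ← Finset.sum_add_distrib]
    exact Finset.sum_congr rfl fun p _ => by ring
  rw [abel]
  -- the sum of g over any index set inside range n
  have hfull : ∀ s : Finset ℕ, (∀ p ∈ s, p < n) →
      ∑ p ∈ s, g p = (∑ p ∈ s, ∑ q ∈ Finset.range n, κ p q * A q)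
        - ∑ q ∈ Finset.range n, ∑ p ∈ s, κ q p * A p := by
    intro s hs
    have e : ∑ q ∈ Finset.range n, ∑ p ∈ s, κ q p * A p
        = ∑ p ∈ s, ∑ q ∈ Finset.range n, κ q p * A p := Finset.sum_comm
    rw [e, ← Finset.sum_sub_distrib]
    refine Finset.sum_congr rfl fun p hp => ?_
    show (∑ q ∈ Finset.range n, κ p q * (A q - A p)) = _
    have : ∑ q ∈ Finset.range n, κ p q * (A q - A p)
        = (∑ q ∈ Finset.range n, κ p q * A q) - (∑ q ∈ Finset.range n, κ p q) * A p := by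
      rw [Finset.sum_mul, ← Finset.sum_sub_distrib]
      exact Finset.sum_congr rfl fun q _ => by ring
    rw [this, ← hbal p (hs p hp), Finset.sum_mul]
  have hGfull : ∑ p ∈ Finset.range n, g p = 0 := by
    rw [hfull (Finset.range n) (fun p hp => Finset.mem_range.mp hp)]
    rw [Finset.sum_comm]
    simp
  -- each partial sum is ≤ 0
  have hGt : ∀ t, t + 1 < n → ∑ p ∈ Finset.range (t+1), g p ≤ 0 := by
    intro t htn
    have ht1n : t + 1 ≤ n := htn.le
    have hUV : ∀ f : ℕ → ℝ, ((∑ q ∈ Finset.range (t+1), f q)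
        + ∑ q ∈ Finset.Ico (t+1) n, f q) = ∑ q ∈ Finset.range n, f q := by
      intro f
      rw [Finset.range_eq_Ico, Finset.range_eq_Ico]
      exact Finset.sum_Ico_consecutive f (Nat.zero_le _) ht1n
    have hmem : ∀ p ∈ Finset.range (t+1), p < n := fun p hp => by
      have := Finset.mem_range.mp hp; omega
    rw [hfull _ hmem]
    have e1 : ∑ p ∈ Finset.range (t+1), ∑ q ∈ Finset.range n, κ p q * A q
        = (∑ p ∈ Finset.range (t+1), ∑ q ∈ Finset.range (t+1), κ p q * A q)
          + ∑ p ∈ Finset.range (t+1), ∑ q ∈ Finset.Ico (t+1) n, κ p q * A q := by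
      rw [← Finset.sum_add_distrib]
      exact Finset.sum_congr rfl fun p _ => (hUV _).symm
    have e2 : ∑ q ∈ Finset.range n, ∑ p ∈ Finset.range (t+1), κ q p * A p
        = (∑ q ∈ Finset.range (t+1), ∑ p ∈ Finset.range (t+1), κ q p * A p)
          + ∑ q ∈ Finset.Ico (t+1) n, ∑ p ∈ Finset.range (t+1), κ q p * A p :=
      (hUV _).symm
    rw [e1, e2]
    have hcancel : ∑ p ∈ Finset.range (t+1), ∑ q ∈ Finset.range (t+1), κ p q * A q
        = ∑ q ∈ Finset.range (t+1), ∑ p ∈ Finset.range (t+1), κ q p * A p := by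
      rw [Finset.sum_comm]
    rw [hcancel]
    have hVU : ∑ q ∈ Finset.Ico (t+1) n, ∑ p ∈ Finset.range (t+1), κ q p * A p
        = ∑ p ∈ Finset.range (t+1), ∑ q ∈ Finset.Ico (t+1) n, κ q p * A p :=
      Finset.sum_comm
    rw [hVU]
    have hmemV : ∀ q ∈ Finset.Ico (t+1) n, t + 1 ≤ q ∧ q < n := fun q hq => by
      have := Finset.mem_Ico.mp hq; omega
    have key1 : ∑ p ∈ Finset.range (t+1), ∑ q ∈ Finset.Ico (t+1) n, κ p q * A q
        ≤ ∑ p ∈ Finset.range (t+1), ∑ q ∈ Finset.Ico (t+1) n, κ p q * A (t+1) := by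
      refine Finset.sum_le_sum fun p hp => Finset.sum_le_sum fun q hq => ?_
      exact mul_le_mul_of_nonneg_left (hA (t+1) q (hmemV q hq).1 (hmemV q hq).2)
        (hκ p q (hmem p hp) (hmemV q hq).2)
    have key2 : ∑ p ∈ Finset.range (t+1), ∑ q ∈ Finset.Ico (t+1) n, κ q p * A t
        ≤ ∑ p ∈ Finset.range (t+1), ∑ q ∈ Finset.Ico (t+1) n, κ q p * A p := by
      refine Finset.sum_le_sum fun p hp => Finset.sum_le_sum fun q hq => ?_
      refine mul_le_mul_of_nonneg_left (hA p t ?_ (by omega)) (hκ q p (hmemV q hq).2 (hmem p hp))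
      have := Finset.mem_range.mp hp; omega
    have e3 : ∑ p ∈ Finset.range (t+1), ∑ q ∈ Finset.Ico (t+1) n, κ p q * A (t+1)
        = (∑ p ∈ Finset.range (t+1), ∑ q ∈ Finset.Ico (t+1) n, κ p q) * A (t+1) := by
      rw [Finset.sum_mul]
      exact Finset.sum_congr rfl fun p _ => by rw [Finset.sum_mul]
    have e4 : ∑ p ∈ Finset.range (t+1), ∑ q ∈ Finset.Ico (t+1) n, κ q p * A t
        = (∑ p ∈ Finset.range (t+1), ∑ q ∈ Finset.Ico (t+1) n, κ q p) * A t := by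
      rw [Finset.sum_mul]
      exact Finset.sum_congr rfl fun p _ => by rw [Finset.sum_mul]
    -- cut balance
    have sU : ∀ κ' : ℕ → ℕ → ℝ, ∑ p ∈ Finset.range (t+1), ∑ q ∈ Finset.range n, κ' p q
        = (∑ p ∈ Finset.range (t+1), ∑ q ∈ Finset.range (t+1), κ' p q)
          + ∑ p ∈ Finset.range (t+1), ∑ q ∈ Finset.Ico (t+1) n, κ' p q := by
      intro κ'
      rw [← Finset.sum_add_distrib]
      exact Finset.sum_congr rfl fun p _ => (hUV _).symm
    have b1 : ∑ p ∈ Finset.range (t+1), ∑ q ∈ Finset.range n, κ p q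
        = ∑ p ∈ Finset.range (t+1), ∑ q ∈ Finset.range n, κ q p :=
      Finset.sum_congr rfl fun p hp => (hbal p (hmem p hp)).symm
    have b2 := sU κ
    have b3 : ∑ p ∈ Finset.range (t+1), ∑ q ∈ Finset.range n, κ q p
        = (∑ p ∈ Finset.range (t+1), ∑ q ∈ Finset.range (t+1), κ q p)
          + ∑ p ∈ Finset.range (t+1), ∑ q ∈ Finset.Ico (t+1) n, κ q p := sU (fun p q => κ q p)
    have b4 : ∑ p ∈ Finset.range (t+1), ∑ q ∈ Finset.range (t+1), κ p q
        = ∑ p ∈ Finset.range (t+1), ∑ q ∈ Finset.range (t+1), κ q p := Finset.sum_comm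
    have hc : ∑ p ∈ Finset.range (t+1), ∑ q ∈ Finset.Ico (t+1) n, κ p q
        = ∑ p ∈ Finset.range (t+1), ∑ q ∈ Finset.Ico (t+1) n, κ q p := by linarith
    have hcnn : 0 ≤ ∑ p ∈ Finset.range (t+1), ∑ q ∈ Finset.Ico (t+1) n, κ p q :=
      Finset.sum_nonneg fun p hp => Finset.sum_nonneg fun q hq =>
        hκ p q (hmem p hp) (hmemV q hq).2
    have hAt : A (t+1) ≤ A t := hA t (t+1) (Nat.le_succ t) htn
    have step : (∑ p ∈ Finset.range (t+1), ∑ q ∈ Finset.Ico (t+1) n, κ p q) * A (t+1)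
        ≤ (∑ p ∈ Finset.range (t+1), ∑ q ∈ Finset.Ico (t+1) n, κ p q) * A t :=
      mul_le_mul_of_nonneg_left hAt hcnn
    have hc2 : (∑ p ∈ Finset.range (t+1), ∑ q ∈ Finset.Ico (t+1) n, κ p q) * A (t+1)
        = (∑ p ∈ Finset.range (t+1), ∑ q ∈ Finset.Ico (t+1) n, κ q p) * A (t+1) := by rw [hc]
    have hc3 : (∑ p ∈ Finset.range (t+1), ∑ q ∈ Finset.Ico (t+1) n, κ p q) * A t
        = (∑ p ∈ Finset.range (t+1), ∑ q ∈ Finset.Ico (t+1) n, κ q p) * A t := by rw [hc]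
    linarith
  -- conclude
  rw [hGfull, mul_zero, add_zero]
  refine Finset.sum_nonpos fun t ht => ?_
  rw [Finset.mem_range] at ht
  by_cases htn : t + 1 < n
  · have h1 : 0 ≤ R t - R (t+1) := sub_nonneg.mpr (hR t (t+1) (Nat.le_succ t) htn)
    exact mul_nonpos_iff.mpr (Or.inl ⟨h1, hGt t htn⟩)
  · have : t + 1 = n := by omega
    rw [this, hGfull, mul_zero]

/-- A function on `{0, ..., n-1}` that decreases at each step is antitone there. -/
lemma step_antitone (n : ℕ) (f : ℕ → ℝ) (hstep : ∀ t, t + 1 < n → f (t+1) ≤ f t) :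
    ∀ p q, p ≤ q → q < n → f q ≤ f p := by
  intro p q hpq hq
  induction q with
  | zero =>
    have : p = 0 := Nat.le_zero.mp hpq
    simp [this]
  | succ q ih =>
    rcases Nat.lt_or_ge p (q+1) with hlt | hge
    · have h1 : f (q+1) ≤ f q := hstep q hq
      have h2 : f q ≤ f p := ih (by omega) (by omega)
      linarith
    · have : p = q + 1 := by omega
      simp [this]

end CoreSection

/-! ### Auxiliary lemmas about ratios and monomials -/

section RatioSection

variable {m : ℕ}

lemma ratio_continuous (xstar : Fin m → ℝ) (zv : Fin m → ℕ) :
    Continuous fun x : Fin m → ℝ => ratio xstar x zv := by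
  unfold ratio
  exact continuous_finset_prod _ fun l _ => ((continuous_apply l).div_const _).pow _

lemma ratio_pos {xstar x : Fin m → ℝ} (hxs : ∀ l, 0 < xstar l) (hx : ∀ l, 0 < x l)
    (zv : Fin m → ℕ) : 0 < ratio xstar x zv :=
  Finset.prod_pos fun l _ => pow_pos (div_pos (hx l) (hxs l)) _

lemma log_ratio {xstar x : Fin m → ℝ} (hxs : ∀ l, 0 < xstar l) (hx : ∀ l, 0 < x l)
    (zv : Fin m → ℕ) :
    Real.log (ratio xstar x zv) = ∑ l, (zv l : ℝ) * Real.log (x l / xstar l) := by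
  unfold ratio
  rw [Real.log_prod (fun l _ => pow_ne_zero _ (ne_of_gt (div_pos (hx l) (hxs l))))]
  simp [Real.log_pow]

lemma mono_split {xstar : Fin m → ℝ} (hxs : ∀ l, 0 < xstar l) (zv : Fin m → ℕ)
    (x : Fin m → ℝ) : mono zv x = mono zv xstar * ratio xstar x zv := by
  unfold mono ratio
  rw [← Finset.prod_mul_distrib]
  refine Finset.prod_congr rfl fun l _ => ?_
  rw [← mul_pow, mul_comm, div_mul_cancel₀ _ (ne_of_gt (hxs l))]

lemma mono_nonneg {xstar : Fin m → ℝ} (hxs : ∀ l, 0 < xstar l) (zv : Fin m → ℕ) :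
    0 ≤ mono zv xstar :=
  Finset.prod_nonneg fun l _ => pow_nonneg (hxs l).le _

end RatioSection

/-! ### The pairing identity and the main inequality -/

section MainIneq

variable {m n : ℕ}

lemma pair_maf (z : Fin n → Fin m → ℕ) (k : Fin n → Fin n → ℝ) (α x : Fin m → ℝ) :
    ∑ l, α l * maf z k x l = ∑ i, ∑ j, k i j * mono (z i) x *
      ((∑ l, α l * (z j l : ℝ)) - ∑ l, α l * (z i l : ℝ)) := by
  unfold maf
  have step1 : ∀ l : Fin m, α l * (∑ i, ∑ j, k i j * ((z j l : ℝ) - (z i l : ℝ)) * mono (z i) x)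
      = ∑ i, ∑ j, α l * (k i j * ((z j l : ℝ) - (z i l : ℝ)) * mono (z i) x) := by
    intro l
    rw [Finset.mul_sum]
    exact Finset.sum_congr rfl fun i _ => by rw [Finset.mul_sum]
  rw [Finset.sum_congr rfl fun l _ => step1 l]
  rw [Finset.sum_comm]
  refine Finset.sum_congr rfl fun i _ => ?_
  rw [Finset.sum_comm]
  refine Finset.sum_congr rfl fun j _ => ?_
  rw [← Finset.sum_sub_distrib, Finset.mul_sum]
  exact Finset.sum_congr rfl fun l _ => by ring

lemma bal' (z : Fin n → Fin m → ℕ) (k : Fin n → Fin n → ℝ) (xstar : Fin m → ℝ)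
    (hcb : complexBalanced z k xstar) (i : Fin n) :
    ∑ j, k j i * mono (z j) xstar = ∑ j, k i j * mono (z i) xstar := by
  rw [hcb i, Finset.mul_sum]
  exact Finset.sum_congr rfl fun j _ => by ring

/-- Main inequality: if `α` pairs antitonely with the `z (μ ·)` along the order,
then `⟨α, f(x)⟩ ≤ 0` on the closure of the stratum. -/
lemma main_ineq (z : Fin n → Fin m → ℕ) (k : Fin n → Fin n → ℝ)
    (hknn : ∀ i j, 0 ≤ k i j) (xstar : Fin m → ℝ) (hxs : ∀ l, 0 < xstar l)
    (hcb : complexBalanced z k xstar) (μ : Equiv.Perm (Fin n)) (α : Fin m → ℝ)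
    (hord : ∀ p : Fin (n-1),
      (∑ l, α l * (z (μ (embS p)) l : ℝ)) ≤ ∑ l, α l * (z (μ (emb p)) l : ℝ))
    (x : Fin m → ℝ) (hx : x ∈ closure (stratum z xstar μ)) :
    ∑ l, α l * maf z k x l ≤ 0 := by
  classical
  -- weak inequalities on the closure
  have hclos : ∀ i : Fin (n-1),
      ratio xstar x (z (μ (embS i))) ≤ ratio xstar x (z (μ (emb i))) := by
    have hsub : closure (stratum z xstar μ) ⊆
        {y | ∀ i : Fin (n-1), ratio xstar y (z (μ (embS i))) ≤ ratio xstar y (z (μ (emb i)))} := by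
      refine closure_minimal (fun y hy i => (hy.2 i).le) ?_
      have : {y : Fin m → ℝ | ∀ i : Fin (n-1),
          ratio xstar y (z (μ (embS i))) ≤ ratio xstar y (z (μ (emb i)))}
          = ⋂ i : Fin (n-1), {y | ratio xstar y (z (μ (embS i))) ≤ ratio xstar y (z (μ (emb i)))} := by
        ext y; simp [Set.mem_iInter]
      rw [this]
      exact isClosed_iInter fun i =>
        isClosed_le (ratio_continuous xstar _) (ratio_continuous xstar _)
    exact hsub hx
  set κ' : Fin n → Fin n → ℝ := fun i j => k i j * mono (z i) xstar with hκ'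
  set A : Fin n → ℝ := fun i => ∑ l, α l * (z i l : ℝ) with hA
  set r : Fin n → ℝ := fun i => ratio xstar x (z i) with hr
  rw [pair_maf]
  have step2 : ∑ i, ∑ j, k i j * mono (z i) x * (A j - A i)
      = ∑ i, ∑ j, κ' i j * r i * (A j - A i) := by
    refine Finset.sum_congr rfl fun i _ => Finset.sum_congr rfl fun j _ => ?_
    rw [mono_split hxs (z i) x, hκ', hr]
    ring
  rw [step2]
  -- reindex by μ
  have step3 : ∑ i, ∑ j, κ' (μ i) (μ j) * r (μ i) * (A (μ j) - A (μ i))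
      = ∑ i, ∑ j, κ' i j * r i * (A j - A i) := by
    have inner : ∀ i : Fin n, ∑ j, κ' i (μ j) * r i * (A (μ j) - A i)
        = ∑ j, κ' i j * r i * (A j - A i) :=
      fun i => Equiv.sum_comp μ (fun j => κ' i j * r i * (A j - A i))
    calc ∑ i, ∑ j, κ' (μ i) (μ j) * r (μ i) * (A (μ j) - A (μ i))
        = ∑ i, ∑ j, κ' (μ i) j * r (μ i) * (A j - A (μ i)) :=
          Finset.sum_congr rfl fun i _ => inner (μ i)
      _ = ∑ i, ∑ j, κ' i j * r i * (A j - A i) :=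
          Equiv.sum_comp μ (fun i => ∑ j, κ' i j * r i * (A j - A i))
  rw [← step3]
  -- convert to sums over `range n`
  set κh : ℕ → ℕ → ℝ := fun p q => if hp : p < n then
      (if hq : q < n then κ' (μ ⟨p,hp⟩) (μ ⟨q,hq⟩) else 0) else 0 with hκh
  set Rh : ℕ → ℝ := fun p => if hp : p < n then r (μ ⟨p,hp⟩) else 0 with hRh
  set Ah : ℕ → ℝ := fun p => if hp : p < n then A (μ ⟨p,hp⟩) else 0 with hAh
  have step4 : ∑ i : Fin n, ∑ j : Fin n, κ' (μ i) (μ j) * r (μ i) * (A (μ j) - A (μ i))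
      = ∑ p ∈ Finset.range n, ∑ q ∈ Finset.range n, κh p q * Rh p * (Ah q - Ah p) := by
    rw [← Fin.sum_univ_eq_sum_range
      (fun p => ∑ q ∈ Finset.range n, κh p q * Rh p * (Ah q - Ah p)) n]
    refine Finset.sum_congr rfl fun i _ => ?_
    rw [← Fin.sum_univ_eq_sum_range (fun q => κh ↑i q * Rh ↑i * (Ah q - Ah ↑i)) n]
    refine Finset.sum_congr rfl fun j _ => ?_
    simp [hκh, hRh, hAh, i.isLt, j.isLt]
  rw [step4]
  apply abel_core
  · intro p q hp hq
    simp only [hκh, dif_pos hp, dif_pos hq, hκ']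
    exact mul_nonneg (hknn _ _) (mono_nonneg hxs _)
  · intro p hp
    rw [← Fin.sum_univ_eq_sum_range (fun q => κh q p) n,
        ← Fin.sum_univ_eq_sum_range (fun q => κh p q) n]
    have e1 : ∀ j : Fin n, κh ↑j p = κ' (μ j) (μ ⟨p, hp⟩) := fun j => by
      simp [hκh, j.isLt, hp]
    have e2 : ∀ j : Fin n, κh p ↑j = κ' (μ ⟨p, hp⟩) (μ j) := fun j => by
      simp [hκh, j.isLt, hp]
    rw [Finset.sum_congr rfl fun j _ => e1 j, Finset.sum_congr rfl fun j _ => e2 j]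
    rw [Equiv.sum_comp μ (fun j => κ' j (μ ⟨p, hp⟩)),
        Equiv.sum_comp μ (fun j => κ' (μ ⟨p, hp⟩) j)]
    exact bal' z k xstar hcb (μ ⟨p, hp⟩)
  · refine step_antitone n Rh (fun t ht => ?_)
    have h1 : t < n := by omega
    simp only [hRh, dif_pos h1, dif_pos ht, hr]
    exact hclos ⟨t, by omega⟩
  · refine step_antitone n Ah (fun t ht => ?_)
    have h1 : t < n := by omega
    simp only [hAh, dif_pos h1, dif_pos ht, hA]
    exact hord ⟨t, by omega⟩

end MainIneq

/-! ### Construction of the vector `α` -/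

section AlphaSection

open Finset
open scoped InnerProductSpace

variable {m n : ℕ}

/-- Embedding of functions into Euclidean space. -/
def toE {m : ℕ} (a : Fin m → ℝ) : EuclideanSpace ℝ (Fin m) :=
  (WithLp.equiv 2 (Fin m → ℝ)).symm a

lemma inner_toE (a : Fin m → ℝ) (y : EuclideanSpace ℝ (Fin m)) :
    ⟪toE a, y⟫_ℝ = ∑ l, a l * y l := by
  simp [toE, PiLp.inner_apply, RCLike.inner_apply]
  exact Finset.sum_congr rfl fun l _ => mul_comm _ _

lemma pair_single_right (a : Fin m → ℝ) (l0 : Fin m) :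
    ∑ l, a l * (Pi.single l0 1 : Fin m → ℝ) l = a l0 := by
  rw [Finset.sum_eq_single l0 (fun l _ hl => by simp [Pi.single_eq_of_ne hl])
    (fun hc => absurd (Finset.mem_univ l0) hc)]
  simp

lemma pair_single_left (y : Fin m → ℝ) (l0 : Fin m) :
    ∑ l, (Pi.single l0 1 : Fin m → ℝ) l * y l = y l0 := by
  rw [Finset.sum_eq_single l0 (fun l _ hl => by simp [Pi.single_eq_of_ne hl])
    (fun hc => absurd (Finset.mem_univ l0) hc)]
  simp

lemma exists_alpha (z : Fin n → Fin m → ℕ) (xstar : Fin m → ℝ) (hxs : ∀ l, 0 < xstar l)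
    (μ : Equiv.Perm (Fin n)) (I : Finset (Fin m))
    (h : (closure (stratum z xstar μ) ∩ LI I).Nonempty) :
    ∃ α : Fin m → ℝ, (∀ l ∈ I, α l < 0) ∧ (∀ l ∉ I, α l = 0) ∧
      ∀ p : Fin (n-1), 0 ≤ ∑ l, ((z (μ (emb p)) l : ℝ) - (z (μ (embS p)) l : ℝ)) * α l := by
  classical
  obtain ⟨xbar, hxcl, hxLI⟩ := h
  obtain ⟨u, humem, hutend⟩ := mem_closure_iff_seq_limit.mp hxcl
  set v : Fin (n-1) → Fin m → ℝ :=
    fun p l => (z (μ (emb p)) l : ℝ) - (z (μ (embS p)) l : ℝ) with hv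
  set B : ℕ → Fin m → ℝ := fun s l => Real.log (u s l / xstar l) with hB
  have hupos : ∀ s l, 0 < u s l := fun s l => (humem s).1 l
  have hBpos : ∀ s (p : Fin (n-1)), 0 < ∑ l, v p l * B s l := by
    intro s p
    have h1 := (humem s).2 p
    have hpos : 0 < ratio xstar (u s) (z (μ (embS p))) := ratio_pos hxs (hupos s) _
    have hlt := Real.log_lt_log hpos h1
    rw [log_ratio hxs (hupos s), log_ratio hxs (hupos s)] at hlt
    have expand : ∑ l, v p l * B s l
        = (∑ l, ((z (μ (emb p)) l : ℝ)) * Real.log (u s l / xstar l))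
          - ∑ l, ((z (μ (embS p)) l : ℝ)) * Real.log (u s l / xstar l) := by
      rw [← Finset.sum_sub_distrib]
      refine Finset.sum_congr rfl fun l _ => ?_
      simp only [hv, hB]
      ring
    rw [expand]
    linarith
  have hBbot : ∀ l, l ∈ I → Filter.Tendsto (fun s => B s l) atTop atBot := by
    intro l hl
    simp only [hB]
    apply Real.tendsto_log_nhdsNE_zero.comp
    apply tendsto_nhdsWithin_of_tendsto_nhds_of_eventually_within
    · have h0 : Filter.Tendsto (fun s => u s l) atTop (𝓝 (xbar l)) :=
        tendsto_pi_nhds.mp hutend l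
      rw [hxLI.1 l hl] at h0
      simpa using h0.div_const (xstar l)
    · exact Filter.Eventually.of_forall fun s => ne_of_gt (div_pos (hupos s l) (hxs l))
  have hBfin : ∀ l, l ∉ I →
      Filter.Tendsto (fun s => B s l) atTop (𝓝 (Real.log (xbar l / xstar l))) := by
    intro l hl
    simp only [hB]
    exact ((Real.continuousAt_log (ne_of_gt (div_pos (hxLI.2 l hl) (hxs l)))).tendsto).comp
      ((tendsto_pi_nhds.mp hutend l).div_const (xstar l))
  set γ : ℕ → Fin m → ℝ := fun s l => if l ∈ I then B s l else 0 with hγ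
  set off : Fin (n-1) → ℕ → ℝ :=
    fun p s => ∑ l, (if l ∈ I then 0 else v p l * B s l) with hoff
  have hγpair : ∀ s (p : Fin (n-1)), ∑ l, γ s l * v p l = (∑ l, v p l * B s l) - off p s := by
    intro s p
    simp only [hγ, hoff]
    rw [← Finset.sum_sub_distrib]
    refine Finset.sum_congr rfl fun l _ => ?_
    by_cases hl : l ∈ I
    · simp [hl]; ring
    · simp [hl]
  set L : Fin (n-1) → ℝ :=
    fun p => ∑ l, (if l ∈ I then 0 else v p l * Real.log (xbar l / xstar l)) with hL
  have hofftend : ∀ p, Filter.Tendsto (fun s => off p s) atTop (𝓝 (L p)) := by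
    intro p
    simp only [hoff, hL]
    refine tendsto_finset_sum _ fun l _ => ?_
    by_cases hl : l ∈ I
    · simp only [if_pos hl]
      exact tendsto_const_nhds
    · simp only [if_neg hl]
      exact (hBfin l hl).const_mul _
  have Ev1 : ∀ᶠ s in atTop, ∀ l, l ∈ I → B s l ≤ 0 := by
    rw [Filter.eventually_all]
    intro l
    by_cases hl : l ∈ I
    · filter_upwards [Filter.tendsto_atBot.mp (hBbot l hl) 0] with s hs
      exact fun _ => hs
    · filter_upwards with s hl'
      exact absurd hl' hl
  have Ev2 : ∀ᶠ s in atTop, ∀ p : Fin (n-1), off p s ≤ L p + 1 := by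
    rw [Filter.eventually_all]
    intro p
    exact (hofftend p).eventually (eventually_le_nhds (lt_add_one (L p)))
  -- per-coordinate construction via Farkas
  have Hy : ∀ l0 ∈ I, ∃ y : EuclideanSpace ℝ (Fin m),
      (∀ p : Fin (n-1), 0 ≤ ∑ l, v p l * y l) ∧ (∀ l ∈ I, y l ≤ 0) ∧
      (∀ l ∉ I, y l = 0) ∧ y l0 < 0 := by
    intro l0 hl0
    set g : (Fin (n-1)) ⊕ (Fin m) ⊕ (Fin m) → EuclideanSpace ℝ (Fin m) :=
      Sum.elim (fun p => toE (v p))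
        (Sum.elim (fun l => toE (-Pi.single l 1))
          (fun l => if l ∈ I then toE (-Pi.single l 1) else toE (Pi.single l 1))) with hg
    have hnonmem : toE (Pi.single l0 1) ∉ fgCone g := by
      rintro ⟨c, hc0, hceq⟩
      set M := ∑ p : Fin (n-1), c (Sum.inl p) * (L p + 1) with hM
      obtain ⟨s, ⟨hs1, hs2⟩, hs3⟩ :=
        ((Ev1.and Ev2).and (Filter.tendsto_atBot.mp (hBbot l0 hl0) (-(M+1)))).exists
      have hγnonpos : ∀ l, γ s l ≤ 0 := by
        intro l
        by_cases hl : l ∈ I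
        · simp only [hγ, if_pos hl]
          exact hs1 l hl
        · simp [hγ, hl]
      have hpaireq := congrArg (fun w => ⟪toE (γ s), w⟫_ℝ) hceq
      have hLHS : ⟪toE (γ s), toE (Pi.single l0 (1:ℝ))⟫_ℝ = B s l0 := by
        rw [inner_toE]
        have : ∀ l, γ s l * toE (Pi.single l0 (1:ℝ)) l
            = γ s l * (Pi.single l0 1 : Fin m → ℝ) l := fun l => rfl
        rw [Finset.sum_congr rfl fun l _ => this l, pair_single_right]
        simp [hγ, hl0]
      have hRHS : ⟪toE (γ s), ∑ i, c i • g i⟫_ℝ = ∑ i, c i * ⟪toE (γ s), g i⟫_ℝ := by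
        rw [inner_sum]
        exact Finset.sum_congr rfl fun i _ => real_inner_smul_right _ _ _
      have hterm1 : ∀ p : Fin (n-1), -(L p + 1) ≤ ⟪toE (γ s), g (Sum.inl p)⟫_ℝ := by
        intro p
        rw [show g (Sum.inl p) = toE (v p) from rfl, inner_toE]
        have e : ∑ l, γ s l * toE (v p) l = ∑ l, γ s l * v p l := rfl
        rw [e, hγpair s p]
        have h1 := hBpos s p
        have h2 := hs2 p
        linarith
      have hpairneg : ∀ l : Fin m, ⟪toE (γ s), toE (-Pi.single l 1)⟫_ℝ = -(γ s l) := by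
        intro l
        rw [inner_toE]
        have e : ∑ l', γ s l' * toE (-Pi.single l (1:ℝ)) l'
            = ∑ l', -(γ s l' * (Pi.single l 1 : Fin m → ℝ) l') := by
          refine Finset.sum_congr rfl fun l' _ => ?_
          show γ s l' * (-(Pi.single l 1 : Fin m → ℝ)) l' = _
          simp [mul_neg]
        rw [e, Finset.sum_neg_distrib, pair_single_right]
      have hterm2 : ∀ l : Fin m, 0 ≤ ⟪toE (γ s), g (Sum.inr (Sum.inl l))⟫_ℝ := by
        intro l
        rw [show g (Sum.inr (Sum.inl l)) = toE (-Pi.single l 1) from rfl, hpairneg]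
        linarith [hγnonpos l]
      have hterm3 : ∀ l : Fin m, 0 ≤ ⟪toE (γ s), g (Sum.inr (Sum.inr l))⟫_ℝ := by
        intro l
        by_cases hl : l ∈ I
        · rw [show g (Sum.inr (Sum.inr l)) = toE (-Pi.single l 1) from by simp [hg, hl], hpairneg]
          linarith [hγnonpos l]
        · rw [show g (Sum.inr (Sum.inr l)) = toE (Pi.single l 1) from by simp [hg, hl], inner_toE]
          have e : ∑ l', γ s l' * toE (Pi.single l (1:ℝ)) l'
              = ∑ l', γ s l' * (Pi.single l 1 : Fin m → ℝ) l' := rfl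
          rw [e, pair_single_right]
          simp [hγ, hl]
      -- combine
      rw [hLHS, hRHS] at hpaireq
      have hsplit : ∑ i, c i * ⟪toE (γ s), g i⟫_ℝ
          = (∑ p : Fin (n-1), c (Sum.inl p) * ⟪toE (γ s), g (Sum.inl p)⟫_ℝ)
            + ((∑ l : Fin m, c (Sum.inr (Sum.inl l)) * ⟪toE (γ s), g (Sum.inr (Sum.inl l))⟫_ℝ)
              + ∑ l : Fin m, c (Sum.inr (Sum.inr l)) * ⟪toE (γ s), g (Sum.inr (Sum.inr l))⟫_ℝ) := by
        rw [Fintype.sum_sum_type]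
        congr 1
        rw [Fintype.sum_sum_type]
      have hb1 : ∑ p : Fin (n-1), c (Sum.inl p) * (-(L p + 1))
          ≤ ∑ p : Fin (n-1), c (Sum.inl p) * ⟪toE (γ s), g (Sum.inl p)⟫_ℝ :=
        Finset.sum_le_sum fun p _ => mul_le_mul_of_nonneg_left (hterm1 p) (hc0 _)
      have hb1' : ∑ p : Fin (n-1), c (Sum.inl p) * (-(L p + 1)) = -M := by
        rw [hM, ← Finset.sum_neg_distrib]
        exact Finset.sum_congr rfl fun p _ => by ring
      have hb2 : (0:ℝ) ≤ ∑ l : Fin m, c (Sum.inr (Sum.inl l)) * ⟪toE (γ s), g (Sum.inr (Sum.inl l))⟫_ℝ :=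
        Finset.sum_nonneg fun l _ => mul_nonneg (hc0 _) (hterm2 l)
      have hb3 : (0:ℝ) ≤ ∑ l : Fin m, c (Sum.inr (Sum.inr l)) * ⟪toE (γ s), g (Sum.inr (Sum.inr l))⟫_ℝ :=
        Finset.sum_nonneg fun l _ => mul_nonneg (hc0 _) (hterm3 l)
      have hBs : B s l0 ≤ -(M+1) := hs3
      linarith [hpaireq, hsplit]
    rcases fg_farkas g (toE (Pi.single l0 1)) with hmem | ⟨y, hy1, hy2⟩
    · exact absurd hmem hnonmem
    have hyle : ∀ l, y l ≤ 0 ∨ True := fun l => Or.inr trivial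
    have hneg : ∀ l : Fin m, -(y l) = ∑ l', (-(Pi.single l 1 : Fin m → ℝ)) l' * y l' := by
      intro l
      have : ∑ l', (-(Pi.single l 1 : Fin m → ℝ)) l' * y l'
          = ∑ l', -((Pi.single l 1 : Fin m → ℝ) l' * y l') := by
        refine Finset.sum_congr rfl fun l' _ => ?_
        simp [neg_mul]
      rw [this, Finset.sum_neg_distrib, pair_single_left]
    have hy_le : ∀ l, y l ≤ 0 := by
      intro l
      have := hy1 (Sum.inr (Sum.inl l))
      rw [show g (Sum.inr (Sum.inl l)) = toE (-Pi.single l 1) from rfl, inner_toE, ← hneg l] at this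
      linarith
    refine ⟨y, ?_, fun l _ => hy_le l, ?_, ?_⟩
    · intro p
      have := hy1 (Sum.inl p)
      rw [show g (Sum.inl p) = toE (v p) from rfl, inner_toE] at this
      exact this
    · intro l hl
      have h2 := hy1 (Sum.inr (Sum.inr l))
      rw [show g (Sum.inr (Sum.inr l)) = toE (Pi.single l 1) from by simp [hg, hl],
        inner_toE, pair_single_left] at h2
      exact le_antisymm (hy_le l) h2
    · rw [real_inner_comm] at hy2
      rw [inner_toE, pair_single_left] at hy2
      exact hy2
  -- sum the `y`s over `l0 ∈ I`
  choose Y hY1 hY2 hY3 hY4 using Hy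
  refine ⟨fun l => ∑ l0 ∈ I.attach, Y l0.1 l0.2 l, ?_, ?_, ?_⟩
  · intro l hl
    have hmem : (⟨l, hl⟩ : {x // x ∈ I}) ∈ I.attach := Finset.mem_attach I _
    have := Finset.add_sum_erase I.attach (fun l0 => Y l0.1 l0.2 l) hmem
    have hrest : ∑ l0 ∈ I.attach.erase ⟨l, hl⟩, Y l0.1 l0.2 l ≤ 0 :=
      Finset.sum_nonpos fun l0 _ => hY2 l0.1 l0.2 l hl
    have hfirst : Y l hl l < 0 := hY4 l hl
    linarith [this]
  · intro l hl
    exact Finset.sum_eq_zero fun l0 _ => hY3 l0.1 l0.2 l hl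
  · intro p
    have e : ∑ l, v p l * (∑ l0 ∈ I.attach, Y l0.1 l0.2 l)
        = ∑ l0 ∈ I.attach, ∑ l, v p l * Y l0.1 l0.2 l := by
      have : ∀ l, v p l * (∑ l0 ∈ I.attach, Y l0.1 l0.2 l)
          = ∑ l0 ∈ I.attach, v p l * Y l0.1 l0.2 l := fun l => Finset.mul_sum _ _ _
      rw [Finset.sum_congr rfl fun l _ => this l, Finset.sum_comm]
    have e2 : ∑ l, ((z (μ (emb p)) l : ℝ) - (z (μ (embS p)) l : ℝ))
          * (∑ l0 ∈ I.attach, Y l0.1 l0.2 l)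
        = ∑ l, v p l * (∑ l0 ∈ I.attach, Y l0.1 l0.2 l) := by
      refine Finset.sum_congr rfl fun l _ => ?_
      simp only [hv]
    rw [e2, e]
    exact Finset.sum_nonneg fun l0 _ => hY1 l0.1 l0.2 p

end AlphaSection

/-- for a (general) complex balanced system, if `cl(S_μ) ∩ L_I ≠ ∅` then
there is `α` negative on `I`, zero off `I`, with `⟨α, f(x)⟩ ≤ 0` on `cl(S_μ)`. -/
theorem stmt8 {m n : ℕ} (z : Fin n → Fin m → ℕ) (hz : Function.Injective z)
    (k : Fin n → Fin n → ℝ) (hknn : ∀ i j, 0 ≤ k i j) (hkd : ∀ i, k i i = 0)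
    (xstar : Fin m → ℝ) (hxs : ∀ l, 0 < xstar l)
    (hcb : complexBalanced z k xstar)
    (μ : Equiv.Perm (Fin n)) (I : Finset (Fin m)) (hI : I.Nonempty)
    (h : (closure (stratum z xstar μ) ∩ LI I).Nonempty) :
    ∃ α : Fin m → ℝ, (∀ i ∈ I, α i < 0) ∧ (∀ i ∉ I, α i = 0) ∧
      ∀ x ∈ closure (stratum z xstar μ), ∑ l, α l * maf z k x l ≤ 0 := by
  obtain ⟨α, hα1, hα2, hα3⟩ := exists_alpha z xstar hxs μ I h
  refine ⟨α, hα1, hα2, fun x hx => main_ineq z k hknn xstar hxs hcb μ α (fun p => ?_) x hx⟩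
  have h0 := hα3 p
  have e : ∑ l, ((z (μ (emb p)) l : ℝ) - (z (μ (embS p)) l : ℝ)) * α l
      = (∑ l, α l * (z (μ (emb p)) l : ℝ)) - ∑ l, α l * (z (μ (embS p)) l : ℝ) := by
    rw [← Finset.sum_sub_distrib]
    exact Finset.sum_congr rfl fun l _ => by ring
  rw [e] at h0
  linarith
end
end
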